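/- arXiv:1310.3646 — 5 statements merged into one kernel-verified Lean document; each statement's English description precedes it below -/
import Mathlib

section
/- For every trajectory x in 𝔼([0,T], S_d) and every m ≥ 1, the last-visit record trajectory R_m x belongs to D([0,T], S_m), i.e. R_m x is right-continuous with left-limits and takes values in {1,…,m}. -/
open Filter Topology Set

noncomputable section
namespace Soft

abbrev Sd := ℕ∞

noncomputable def sval (k : Sd) : ℝ := if k = ⊤ then 0 else 1 / ((k.toNat : ℝ) + 1)

noncomputable def sdist (k j : Sd) : ℝ := |sval k - sval j|

/-- left-limit filter within `[0,T]` -/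
def lf (T t : ℝ) : Filter ℝ := 𝓝[Set.Icc 0 T ∩ Set.Iio t] t

/-- right-limit filter within `[0,T]` -/
def rf (T t : ℝ) : Filter ℝ := 𝓝[Set.Icc 0 T ∩ Set.Ioi t] t

def leftLim (T : ℝ) (x : ℝ → Sd) (t : ℝ) (L : Sd) : Prop := Tendsto x (lf T t) (𝓝 L)

def rightLim (T : ℝ) (x : ℝ → Sd) (t : ℝ) (L : Sd) : Prop := Tendsto x (rf T t) (𝓝 L)

/-- the set of cluster points of `x(s)`, `s ↑ t`, is exactly the pair `{n, ∞}` -/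
def softLeftPair (T : ℝ) (x : ℝ → Sd) (t : ℝ) (n : ℕ) : Prop :=
  {L : Sd | MapClusterPt L (lf T t) x} = {(n : Sd), ⊤}

def softRightPair (T : ℝ) (x : ℝ → Sd) (t : ℝ) (n : ℕ) : Prop :=
  {L : Sd | MapClusterPt L (rf T t) x} = {(n : Sd), ⊤}

/-- `x` has a soft left-limit at `t` -/
def softLeftLim (T : ℝ) (x : ℝ → Sd) (t : ℝ) : Prop :=
  (∃ L, leftLim T x t L) ∨ ∃ n : ℕ, softLeftPair T x t n

/-- `x` is soft right-continuous at `t` -/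
def softRightCont (T : ℝ) (x : ℝ → Sd) (t : ℝ) : Prop :=
  rightLim T x t ⊤ ∨ (∃ n : ℕ, rightLim T x t (n : Sd) ∧ x t = (n : Sd)) ∨
    ∃ n : ℕ, softRightPair T x t n ∧ x t = (n : Sd)

/-- the space `𝔼([0,T], S_d)` of soft right-continuous trajectories with soft left-limits -/
def memBbE (T : ℝ) (x : ℝ → Sd) : Prop :=
  (∀ t ∈ Set.Icc 0 T, softRightCont T x t) ∧ ∀ t ∈ Set.Ioc 0 T, softLeftLim T x t

/-- time of last visit before `t` to the set `{k : P k}` (with the convention `= 0`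
if there is no such visit, since `sSup ∅ = 0` in `ℝ`) -/
def lastVisit (P : Sd → Prop) (x : ℝ → Sd) (t : ℝ) : ℝ :=
  sSup {s | s ∈ Set.Icc 0 t ∧ P (x s)}

open Classical in
/-- the record operator: the last value in `{k : P k}` visited by `x` before time `t`;
equal to the bottom state `0` before the first visit -/
noncomputable def srec (T : ℝ) (P : Sd → Prop) (x : ℝ → Sd) (t : ℝ) : Sd :=
  if ∃ s ∈ Set.Icc 0 t, P (x s) then
    if P (x (lastVisit P x t)) then x (lastVisit P x t)
    else if h : ∃ L, leftLim T x (lastVisit P x t) L then h.choose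
    else if h2 : ∃ n : ℕ, softLeftPair T x (lastVisit P x t) n then (h2.choose : Sd)
    else 0
  else 0

/-- `R_m`, the operator recording the last site visited in `S_m = {0,…,m}` -/
noncomputable def Rm (T : ℝ) (m : ℕ) (x : ℝ → Sd) : ℝ → Sd :=
  srec T (fun k => k ≤ (m : Sd)) x

/-- `R_∞`, the operator recording the last site visited in `ℕ` -/
noncomputable def Rinf (T : ℝ) (x : ℝ → Sd) : ℝ → Sd := srec T (fun k => k ≠ ⊤) x

/-- `σ_∞(t)`, the time of the last visit to `ℕ` before `t` -/
def sigmaInf (x : ℝ → Sd) (t : ℝ) : ℝ := lastVisit (fun k => k ≠ ⊤) x t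

/-- `D([0,T], S_m)`: càdlàg trajectories with values in `S_m = {0,…,m}` -/
def memD (T : ℝ) (m : ℕ) (x : ℝ → Sd) : Prop :=
  (∀ t ∈ Set.Icc 0 T, x t ≤ (m : Sd)) ∧
  (∀ t ∈ Set.Ico 0 T, rightLim T x t (x t)) ∧
  ∀ t ∈ Set.Ioc 0 T, ∃ L, leftLim T x t L

/-- `D([0,T], S_d)`: càdlàg trajectories with values in `S_d` -/
def memDd (T : ℝ) (x : ℝ → Sd) : Prop :=
  (∀ t ∈ Set.Ico 0 T, rightLim T x t (x t)) ∧
  ∀ t ∈ Set.Ioc 0 T, ∃ L, leftLim T x t L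

/-- the space `E([0,T], S_d)` -/
def memE (T : ℝ) (x : ℝ → Sd) : Prop :=
  memBbE T x ∧ x 0 ≠ ⊤ ∧
  ∀ t ∈ Set.Ioc 0 T, x t = ⊤ →
    0 < sigmaInf x t ∧ x (sigmaInf x t) = ⊤ ∧ leftLim T x (sigmaInf x t) ⊤

/-- `Λ_T(x)`, the time spent at `∞` -/
noncomputable def LambdaT (T : ℝ) (x : ℝ → Sd) : ℝ :=
  (MeasureTheory.volume {s | s ∈ Set.Icc 0 T ∧ x s = ⊤}).toReal

/-- `D^*([0,T], S_d)`: càdlàg trajectories spending no time at `∞`, continuous at `T` -/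
def memDstar (T : ℝ) (x : ℝ → Sd) : Prop :=
  memDd T x ∧ LambdaT T x = 0 ∧ leftLim T x T (x T)

/-- `E^*([0,T], S_d)`: the image of `D^*([0,T], S_d)` under `R_∞` -/
def memEstar (T : ℝ) (x : ℝ → Sd) : Prop :=
  memE T x ∧ ∃ y, memDstar T y ∧ Set.EqOn (Rinf T y) x (Set.Icc 0 T)

/-- the set `Λ` of time changes: increasing continuous bijections of `[0,T]` fixing `0, T` -/
def TimeChange (T : ℝ) (l : ℝ → ℝ) : Prop :=
  l 0 = 0 ∧ l T = T ∧ ContinuousOn l (Set.Icc 0 T) ∧ StrictMonoOn l (Set.Icc 0 T) ∧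
    Set.MapsTo l (Set.Icc 0 T) (Set.Icc 0 T)

/-- the Skorohod metric -/
noncomputable def dS (T : ℝ) (x y : ℝ → Sd) : ℝ :=
  sInf {a : ℝ | ∃ l, TimeChange T l ∧
    (∀ t ∈ Set.Icc 0 T, sdist (x t) (y (l t)) ≤ a) ∧
    ∀ s ∈ Set.Icc 0 T, ∀ t ∈ Set.Icc 0 T, s < t → |Real.log ((l t - l s) / (t - s))| ≤ a}

/-- the soft metric `d(x,y) = Σ_m 2^{-(m+1)} d_S(R_m x, R_m y)` -/
noncomputable def dE (T : ℝ) (x y : ℝ → Sd) : ℝ :=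
  ∑' m : ℕ, (1 / 2 : ℝ) ^ (m + 1) * dS T (Rm T m x) (Rm T m y)

/-- the left endpoints of the maximal intervals on which `x = j` -/
def entryPoints (T : ℝ) (j : Sd) (x : ℝ → Sd) : Set ℝ :=
  {t | t ∈ Set.Icc 0 T ∧ x t = j ∧
    (t = 0 ∨ ∀ δ > 0, ∃ s ∈ Set.Ioo (t - δ) t ∩ Set.Icc 0 T, x s ≠ j)}

/-- `N_j(x)`, the number of visits of `x` to `j` -/
noncomputable def Nvisits (T : ℝ) (j : Sd) (x : ℝ → Sd) : ℕ := (entryPoints T j x).ncard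

/-- the start of the `(l+1)`-th visit to `j` (0-indexed) -/
noncomputable def nthEntry (T : ℝ) (j : Sd) (x : ℝ → Sd) (l : ℕ) : ℝ :=
  sInf {e | e ∈ entryPoints T j x ∧ {s | s ∈ entryPoints T j x ∧ s < e}.ncard = l}

noncomputable def exitTime (T : ℝ) (j : Sd) (x : ℝ → Sd) (t : ℝ) : ℝ :=
  sInf ({s | s ∈ Set.Ioc t T ∧ x s ≠ j} ∪ {T})

/-- `T_{j,l}(x)`, the length of the `l`-th holding interval at `j` (1-indexed),
`0` if `l > N_j(x)` -/
noncomputable def holdingTime (T : ℝ) (j : Sd) (x : ℝ → Sd) (l : ℕ) : ℝ :=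
  if 1 ≤ l ∧ l ≤ Nvisits T j x then
    exitTime T j x (nthEntry T j x (l - 1)) - nthEntry T j x (l - 1)
  else 0

end Soft


namespace StmtFourAux

open Soft

variable {T : ℝ} {m : ℕ} {x : ℝ → Soft.Sd}

lemma Iic_finite (m : ℕ) : (Set.Iic ((m : ℕ) : Soft.Sd)).Finite := by
  have hsub : Set.Iic ((m : ℕ) : Soft.Sd) ⊆ (fun k : ℕ => (k : Soft.Sd)) '' Set.Iic m := by
    intro k hk
    have hk' : k ≠ ⊤ := ne_top_of_le_ne_top (ENat.coe_ne_top m) hk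
    lift k to ℕ using hk'
    exact ⟨k, Set.mem_Iic.2 (by exact_mod_cast Set.mem_Iic.1 hk), rfl⟩
  exact ((Set.finite_Iic m).image _).subset hsub

lemma freq_mapClusterPt {F : Filter ℝ} {j : Soft.Sd} (h : ∃ᶠ s in F, x s = j) :
    MapClusterPt j F x :=
  mapClusterPt_iff_frequently.2 fun U hU => h.mono fun s hs => hs ▸ mem_of_mem_nhds hU

lemma exists_cluster_of_finite {F : Filter ℝ} [F.NeBot] {S : Set Soft.Sd}
    (hS : S.Finite) (h : ∀ᶠ s in F, x s ∈ S) : ∃ j ∈ S, MapClusterPt j F x := by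
  by_contra hc
  push_neg at hc
  have hev : ∀ j ∈ S, ∀ᶠ s in F, x s ≠ j := by
    intro j hj
    have h1 := hc j hj
    rw [mapClusterPt_iff_frequently] at h1
    push_neg at h1
    obtain ⟨U, hU, hU2⟩ := h1
    filter_upwards [hU2] with s hs heq
    exact hs (heq ▸ mem_of_mem_nhds hU)
  obtain ⟨s, h1, h2⟩ := (((eventually_all_finite hS).2 hev).and h).exists
  exact h1 _ h2 rfl

lemma pair_eventually_eq {F : Filter ℝ} {n : ℕ}
    (hpair : {L : Soft.Sd | MapClusterPt L F x} = {((n : ℕ) : Soft.Sd), ⊤}) :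
    ∀ᶠ s in F, x s ≤ (m : Soft.Sd) → x s = ((n : ℕ) : Soft.Sd) := by
  by_contra hc
  rw [Filter.not_eventually] at hc
  have hc' : ∃ᶠ s in F, x s ∈ Set.Iic ((m : ℕ) : Soft.Sd) \ {((n : ℕ) : Soft.Sd)} := by
    refine hc.mono fun s hs => ?_
    push_neg at hs
    exact ⟨hs.1, hs.2⟩
  have hne : (F ⊓ 𝓟 {s | x s ∈ Set.Iic ((m : ℕ) : Soft.Sd) \ {((n : ℕ) : Soft.Sd)}}).NeBot :=
    frequently_mem_iff_neBot.1 hc'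
  obtain ⟨j, hj, hcl⟩ := exists_cluster_of_finite (x := x)
    (F := F ⊓ 𝓟 {s | x s ∈ Set.Iic ((m : ℕ) : Soft.Sd) \ {((n : ℕ) : Soft.Sd)}})
    ((Iic_finite m).diff (t := {((n : ℕ) : Soft.Sd)}))
    (eventually_inf_principal.2 (Eventually.of_forall fun s hs => hs))
  have hcl' : MapClusterPt j F x := hcl.mono inf_le_left
  have hmem : j ∈ ({((n : ℕ) : Soft.Sd), ⊤} : Set Soft.Sd) := hpair ▸ hcl'
  rcases hmem with rfl | rfl
  · exact hj.2 rfl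
  · exact (ENat.coe_ne_top m) (top_le_iff.1 hj.1)

lemma pair_le {F : Filter ℝ} {n : ℕ}
    (hpair : {L : Soft.Sd | MapClusterPt L F x} = {((n : ℕ) : Soft.Sd), ⊤})
    (hne : (F ⊓ 𝓟 {s | x s ≤ (m : Soft.Sd)}).NeBot) : ((n : ℕ) : Soft.Sd) ≤ (m : Soft.Sd) := by
  obtain ⟨j, hj, hcl⟩ := exists_cluster_of_finite (x := x) (Iic_finite m)
    (F := F ⊓ 𝓟 {s | x s ≤ (m : Soft.Sd)})
    (eventually_inf_principal.2 (Eventually.of_forall fun s hs => hs))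
  have hcl' : MapClusterPt j F x := hcl.mono inf_le_left
  have hmem : j ∈ ({((n : ℕ) : Soft.Sd), ⊤} : Set Soft.Sd) := hpair ▸ hcl'
  rcases hmem with rfl | rfl
  · exact hj
  · exact absurd (top_le_iff.1 hj) (ENat.coe_ne_top m)

lemma lim_le {F : Filter ℝ} {L : Soft.Sd}
    (hLim : Tendsto x F (𝓝 L)) (hne : (F ⊓ 𝓟 {s | x s ≤ (m : Soft.Sd)}).NeBot) :
    L ≤ (m : Soft.Sd) := by
  have h1 : Tendsto x (F ⊓ 𝓟 {s | x s ≤ (m : Soft.Sd)}) (𝓝 L) := hLim.mono_left inf_le_left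
  exact (isClosed_Iic (a := ((m : ℕ) : Soft.Sd))).mem_of_tendsto h1
    (eventually_inf_principal.2 (Eventually.of_forall fun s hs => hs))

lemma neBot_within {S : Set ℝ} {t : ℝ}
    (h : ∀ ε > 0, ∃ s ∈ S, |t - s| < ε) : (𝓝[S] t).NeBot := by
  rw [← mem_closure_iff_nhdsWithin_neBot, Metric.mem_closure_iff]
  simpa [Real.dist_eq] using h

lemma srec_congr {t u : ℝ} (htu : t ≤ u)
    (h : ∀ s, t < s → s ≤ u → ¬ x s ≤ (m : Soft.Sd)) : Rm T m x u = Rm T m x t := by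
  have hset : {s | s ∈ Set.Icc 0 u ∧ x s ≤ (m : Soft.Sd)}
      = {s | s ∈ Set.Icc 0 t ∧ x s ≤ (m : Soft.Sd)} := by
    ext s
    constructor
    · rintro ⟨⟨h0, hsu⟩, hxs⟩
      refine ⟨⟨h0, ?_⟩, hxs⟩
      by_contra hst
      push_neg at hst
      exact h s hst hsu hxs
    · rintro ⟨⟨h0, hst⟩, hxs⟩
      exact ⟨⟨h0, hst.trans htu⟩, hxs⟩
  have hlv : lastVisit (fun k => k ≤ (m : Soft.Sd)) x u
      = lastVisit (fun k => k ≤ (m : Soft.Sd)) x t := by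
    simp only [lastVisit]
    rw [hset]
  have hcond : (∃ s ∈ Set.Icc 0 u, x s ≤ (m : Soft.Sd))
      ↔ (∃ s ∈ Set.Icc 0 t, x s ≤ (m : Soft.Sd)) := by
    constructor <;> rintro ⟨s, hs1, hs2⟩
    · exact ⟨s, ((Set.ext_iff.1 hset s).1 ⟨hs1, hs2⟩).1, hs2⟩
    · exact ⟨s, ⟨hs1.1, hs1.2.trans htu⟩, hs2⟩
  simp only [Rm, srec]
  rw [hlv, hcond]

lemma srec_eq (hx : memBbE T x) {n : ℕ} {u s0 : ℝ}
    (h0 : 0 ≤ s0) (hsu : s0 ≤ u) (huT : u ≤ T) (hv : x s0 ≤ (m : Soft.Sd))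
    (hn : ∀ s, s0 ≤ s → s ≤ u → x s ≤ (m : Soft.Sd) → x s = ((n : ℕ) : Soft.Sd)) :
    Rm T m x u = ((n : ℕ) : Soft.Sd) := by
  have hex : ∃ s ∈ Set.Icc 0 u, x s ≤ (m : Soft.Sd) := ⟨s0, ⟨h0, hsu⟩, hv⟩
  simp only [Rm, srec]
  rw [if_pos hex]
  set σ := lastVisit (fun k => k ≤ (m : Soft.Sd)) x u with hσdef
  have hbdd : BddAbove {s | s ∈ Set.Icc 0 u ∧ x s ≤ (m : Soft.Sd)} :=
    ⟨u, fun s hs => hs.1.2⟩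
  have hne : {s | s ∈ Set.Icc 0 u ∧ x s ≤ (m : Soft.Sd)}.Nonempty := ⟨s0, ⟨h0, hsu⟩, hv⟩
  have hσ0 : s0 ≤ σ := le_csSup hbdd ⟨⟨h0, hsu⟩, hv⟩
  have hσu : σ ≤ u := csSup_le hne fun s hs => hs.1.2
  by_cases hP : x σ ≤ (m : Soft.Sd)
  · rw [if_pos hP]
    exact hn σ hσ0 hσu hP
  · rw [if_neg hP]
    have hσs0 : s0 < σ := lt_of_le_of_ne hσ0 (fun h => hP (h ▸ hv))
    have hσpos : 0 < σ := lt_of_le_of_lt h0 hσs0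
    have hFne : (𝓝[(Set.Icc 0 T ∩ Set.Iio σ) ∩ {s | x s = ((n : ℕ) : Soft.Sd)}] σ).NeBot := by
      apply neBot_within
      intro ε hε
      have hδpos : 0 < min ε (σ - s0) := lt_min hε (by linarith)
      obtain ⟨s, hs, hlt⟩ := exists_lt_of_lt_csSup hne
        (show σ - min ε (σ - s0) < σ by linarith)
      have hsle : s ≤ σ := le_csSup hbdd hs
      have hsne : s ≠ σ := fun h => hP (h ▸ hs.2)
      have hslt : s < σ := lt_of_le_of_ne hsle hsne
      have hm2 := min_le_right ε (σ - s0)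
      have hm1 := min_le_left ε (σ - s0)
      have hs0 : s0 < s := by linarith
      refine ⟨s, ⟨⟨⟨hs.1.1, hs.1.2.trans huT⟩, hslt⟩, hn s hs0.le hs.1.2 hs.2⟩, ?_⟩
      rw [abs_sub_lt_iff]
      constructor <;> linarith
    have hF_le : 𝓝[(Set.Icc 0 T ∩ Set.Iio σ) ∩ {s | x s = ((n : ℕ) : Soft.Sd)}] σ ≤ lf T σ :=
      nhdsWithin_mono σ Set.inter_subset_left
    have hFn : Tendsto x (𝓝[(Set.Icc 0 T ∩ Set.Iio σ) ∩ {s | x s = ((n : ℕ) : Soft.Sd)}] σ)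
        (𝓝 ((n : ℕ) : Soft.Sd)) := by
      apply Tendsto.congr' _ tendsto_const_nhds
      filter_upwards [self_mem_nhdsWithin] with s hs
      exact hs.2.symm
    have hsoft := hx.2 σ ⟨hσpos, hσu.trans huT⟩
    by_cases hL : ∃ L, leftLim T x σ L
    · rw [dif_pos hL]
      have h1 : Tendsto x (𝓝[(Set.Icc 0 T ∩ Set.Iio σ) ∩ {s | x s = ((n : ℕ) : Soft.Sd)}] σ)
          (𝓝 hL.choose) := Filter.Tendsto.mono_left hL.choose_spec hF_le
      exact tendsto_nhds_unique h1 hFn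
    · rw [dif_neg hL]
      have hp' : ∃ n' : ℕ, softLeftPair T x σ n' := by
        rcases hsoft with h | h
        · exact absurd h hL
        · exact h
      rw [dif_pos hp']
      have hps : {L : Soft.Sd | MapClusterPt L (lf T σ) x}
          = {((hp'.choose : ℕ) : Soft.Sd), ⊤} := hp'.choose_spec
      have hfr : ∃ᶠ s in lf T σ, x s = ((n : ℕ) : Soft.Sd) := by
        have hfr' : ∃ᶠ s in lf T σ,
            s ∈ (Set.Icc 0 T ∩ Set.Iio σ) ∩ {s | x s = ((n : ℕ) : Soft.Sd)} := by
          rw [frequently_mem_iff_neBot]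
          rw [lf, ← nhdsWithin_inter']
          have : (Set.Icc 0 T ∩ Set.Iio σ) ∩
              ((Set.Icc 0 T ∩ Set.Iio σ) ∩ {s | x s = ((n : ℕ) : Soft.Sd)})
              = (Set.Icc 0 T ∩ Set.Iio σ) ∩ {s | x s = ((n : ℕ) : Soft.Sd)} := by
            rw [← Set.inter_assoc, Set.inter_self]
          rw [this]
          exact hFne
        exact hfr'.mono fun s hs => hs.2
      have hcl : MapClusterPt ((n : ℕ) : Soft.Sd) (lf T σ) x := freq_mapClusterPt hfr
      have hmem : ((n : ℕ) : Soft.Sd) ∈ ({((hp'.choose : ℕ) : Soft.Sd), ⊤} : Set Soft.Sd) :=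
        hps ▸ hcl
      rcases hmem with h | h
      · exact h.symm
      · exact absurd h (ENat.coe_ne_top n)

lemma Rm_le (hx : memBbE T x) {t : ℝ} (ht : t ∈ Set.Icc 0 T) :
    Rm T m x t ≤ (m : Soft.Sd) := by
  simp only [Rm, srec]
  by_cases hex : ∃ s ∈ Set.Icc 0 t, x s ≤ (m : Soft.Sd)
  swap
  · rw [if_neg hex]; exact zero_le
  rw [if_pos hex]
  set σ := lastVisit (fun k => k ≤ (m : Soft.Sd)) x t with hσdef
  obtain ⟨s0, hs0, hvs0⟩ := hex
  have hbdd : BddAbove {s | s ∈ Set.Icc 0 t ∧ x s ≤ (m : Soft.Sd)} := ⟨t, fun s hs => hs.1.2⟩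
  have hne : Set.Nonempty {s | s ∈ Set.Icc 0 t ∧ x s ≤ (m : Soft.Sd)} := ⟨s0, hs0, hvs0⟩
  have hσ0 : s0 ≤ σ := le_csSup hbdd ⟨hs0, hvs0⟩
  have hσt : σ ≤ t := csSup_le hne fun s hs => hs.1.2
  by_cases hP : x σ ≤ (m : Soft.Sd)
  · rw [if_pos hP]; exact hP
  rw [if_neg hP]
  have hσs0 : s0 < σ := lt_of_le_of_ne hσ0 fun h => hP (h ▸ hvs0)
  have hσpos : 0 < σ := lt_of_le_of_lt hs0.1 hσs0
  have hne2 : ((lf T σ) ⊓ 𝓟 {s | x s ≤ (m : Soft.Sd)}).NeBot := by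
    rw [lf, ← nhdsWithin_inter']
    apply neBot_within
    intro ε hε
    obtain ⟨s, hs, hlt⟩ := exists_lt_of_lt_csSup hne (show σ - ε < σ by linarith)
    have hsle : s ≤ σ := le_csSup hbdd hs
    have hslt : s < σ := lt_of_le_of_ne hsle fun h => hP (h ▸ hs.2)
    refine ⟨s, ⟨⟨⟨hs.1.1, hs.1.2.trans ht.2⟩, hslt⟩, hs.2⟩, ?_⟩
    rw [abs_sub_lt_iff]
    constructor <;> linarith
  by_cases hL : ∃ L, leftLim T x σ L
  · rw [dif_pos hL]
    exact lim_le hL.choose_spec hne2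
  rw [dif_neg hL]
  by_cases hp : ∃ n', softLeftPair T x σ n'
  · rw [dif_pos hp]
    exact pair_le hp.choose_spec hne2
  · rw [dif_neg hp]; exact zero_le

lemma right_aux (hx : memBbE T x) {t : ℝ} (ht : t ∈ Set.Ico 0 T) {n : ℕ}
    (hxt : x t = ((n : ℕ) : Soft.Sd)) (hnm : ((n : ℕ) : Soft.Sd) ≤ (m : Soft.Sd))
    (hev : ∀ᶠ s in rf T t, x s ≤ (m : Soft.Sd) → x s = ((n : ℕ) : Soft.Sd)) :
    Tendsto (Rm T m x) (rf T t) (𝓝 (Rm T m x t)) := by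
  have hxtm : x t ≤ (m : Soft.Sd) := by rw [hxt]; exact hnm
  have hRt : Rm T m x t = ((n : ℕ) : Soft.Sd) :=
    srec_eq hx ht.1 le_rfl ht.2.le hxtm
      (fun s h1 h2 _ => by rw [le_antisymm h2 h1]; exact hxt)
  obtain ⟨δ, hδ, hδs⟩ : ∃ δ > 0, ∀ u, dist u t < δ →
      u ∈ Set.Icc 0 T ∩ Set.Ioi t → (x u ≤ (m : Soft.Sd) → x u = ((n : ℕ) : Soft.Sd)) := by
    rw [rf, eventually_nhdsWithin_iff, Metric.eventually_nhds_iff] at hev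
    obtain ⟨ε, hε, h⟩ := hev
    exact ⟨ε, hε, fun u h1 h2 => h h1 h2⟩
  have hevR : ∀ᶠ u in rf T t, Rm T m x u = ((n : ℕ) : Soft.Sd) := by
    rw [rf, eventually_nhdsWithin_iff, Metric.eventually_nhds_iff]
    refine ⟨δ, hδ, fun u hdu hu => ?_⟩
    have hut : t < u := hu.2
    have hudlt : u - t < δ := by
      rw [Real.dist_eq] at hdu
      exact (abs_lt.1 hdu).2
    refine srec_eq hx ht.1 hut.le hu.1.2 hxtm ?_
    intro s hs1 hs2 hs3
    rcases eq_or_lt_of_le hs1 with h | h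
    · rw [← h]; exact hxt
    · refine hδs s ?_ ⟨⟨ht.1.trans hs1, hs2.trans hu.1.2⟩, h⟩ hs3
      rw [Real.dist_eq, abs_of_pos (by linarith)]
      linarith
  rw [hRt]
  exact Tendsto.congr' (hevR.mono fun u h => h.symm) tendsto_const_nhds

lemma left_aux (hx : memBbE T x) {t : ℝ} (ht : t ∈ Set.Ioc 0 T) {n : ℕ}
    (hB : ∀ ε > 0, ∃ s, t - ε < s ∧ s < t ∧ 0 ≤ s ∧ x s ≤ (m : Soft.Sd))
    (hev : ∀ᶠ s in lf T t, x s ≤ (m : Soft.Sd) → x s = ((n : ℕ) : Soft.Sd)) :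
    ∃ L, Tendsto (Rm T m x) (lf T t) (𝓝 L) := by
  obtain ⟨δ, hδ, hδs⟩ : ∃ δ > 0, ∀ u, dist u t < δ →
      u ∈ Set.Icc 0 T ∩ Set.Iio t → (x u ≤ (m : Soft.Sd) → x u = ((n : ℕ) : Soft.Sd)) := by
    rw [lf, eventually_nhdsWithin_iff, Metric.eventually_nhds_iff] at hev
    obtain ⟨ε, hε, h⟩ := hev
    exact ⟨ε, hε, fun u h1 h2 => h h1 h2⟩
  obtain ⟨s0, hs01, hs02, hs03, hs04⟩ := hB (min δ t) (lt_min hδ ht.1)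
  have hm1 := min_le_left δ t
  have hm2 := min_le_right δ t
  have hs0δ : t - δ < s0 := by linarith
  have hxs0 : x s0 = ((n : ℕ) : Soft.Sd) := by
    refine hδs s0 ?_ ⟨⟨hs03, hs02.le.trans ht.2⟩, hs02⟩ hs04
    rw [Real.dist_eq, abs_of_neg (by linarith)]
    linarith
  refine ⟨((n : ℕ) : Soft.Sd), ?_⟩
  have hevR : ∀ᶠ u in lf T t, Rm T m x u = ((n : ℕ) : Soft.Sd) := by
    rw [lf, eventually_nhdsWithin_iff, Metric.eventually_nhds_iff]
    refine ⟨t - s0, by linarith, fun u hdu hu => ?_⟩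
    have hult : u < t := hu.2
    have hs0u : s0 ≤ u := by
      rw [Real.dist_eq, abs_of_neg (by linarith)] at hdu
      linarith
    refine srec_eq hx hs03 hs0u hu.1.2 hs04 ?_
    intro s hs1 hs2 hs3
    refine hδs s ?_ ⟨⟨hs03.trans hs1, (hs2.trans_lt hult).le.trans ht.2⟩, hs2.trans_lt hult⟩ hs3
    rw [Real.dist_eq, abs_of_nonpos (by linarith)]
    linarith
  exact Tendsto.congr' (hevR.mono fun u h => h.symm) tendsto_const_nhds

end StmtFourAux

open Soft Filter Topology in
/-- For every `x ∈ 𝔼([0,T], S_d)` and every `m`, the last-visit record trajectory `R_m x`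
belongs to `D([0,T], S_m)`: it is càdlàg with values in `S_m`. -/
theorem stmt4 (T : ℝ) (hT : 0 < T) (x : ℝ → Soft.Sd) (hx : Soft.memBbE T x) (m : ℕ) :
    Soft.memD T m (Soft.Rm T m x) := by
  refine ⟨fun t ht => StmtFourAux.Rm_le hx ht, fun t ht => ?_, fun t ht => ?_⟩
  · -- right continuity
    show Tendsto (Rm T m x) (rf T t) (𝓝 (Rm T m x t))
    by_cases hA : ∃ ε > 0, ∀ s, t < s → s < t + ε → s ≤ T → ¬ x s ≤ (m : Sd)
    · obtain ⟨ε, hε, hAs⟩ := hA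
      have hevR : ∀ᶠ u in rf T t, Rm T m x u = Rm T m x t := by
        rw [rf, eventually_nhdsWithin_iff, Metric.eventually_nhds_iff]
        refine ⟨ε, hε, fun u hdu hu => ?_⟩
        have hut : t < u := hu.2
        have h1 : u - t < ε := by
          rw [Real.dist_eq] at hdu
          exact (abs_lt.1 hdu).2
        exact StmtFourAux.srec_congr hut.le
          (fun s hs1 hs2 => hAs s hs1 (by linarith) (hs2.trans hu.1.2))
      exact Tendsto.congr' (hevR.mono fun u h => h.symm) tendsto_const_nhds
    · push_neg at hA
      have hGne : ((rf T t) ⊓ 𝓟 {s | x s ≤ (m : Sd)}).NeBot := by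
        rw [rf, ← nhdsWithin_inter']
        apply StmtFourAux.neBot_within
        intro ε hε
        obtain ⟨s, h1, h2, h3, h4⟩ := hA ε hε
        refine ⟨s, ⟨⟨⟨ht.1.trans h1.le, h3⟩, h1⟩, h4⟩, ?_⟩
        rw [abs_sub_lt_iff]
        constructor <;> linarith
      rcases hx.1 t ⟨ht.1, ht.2.le⟩ with htop | ⟨n, hrl, hxt⟩ | ⟨n, hp, hxt⟩
      · exfalso
        have h1 : Tendsto x ((rf T t) ⊓ 𝓟 {s | x s ≤ (m : Sd)}) (𝓝 ⊤) :=
          Filter.Tendsto.mono_left htop inf_le_left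
        have h2 : (⊤ : Sd) ∈ Set.Iic ((m : ℕ) : Sd) :=
          (isClosed_Iic (a := ((m : ℕ) : Sd))).mem_of_tendsto h1
            (eventually_inf_principal.2 (Eventually.of_forall fun s hs => hs))
        exact ENat.coe_ne_top m (top_le_iff.1 h2)
      · have hrl' : Tendsto x (rf T t) (𝓝 ((n : ℕ) : Sd)) := hrl
        haveI := hGne
        have hevn : ∀ᶠ s in rf T t, x s = ((n : ℕ) : Sd) := by
          refine hrl'.eventually (p := fun y => y = ((n : ℕ) : Sd)) ?_
          rw [ENat.nhds_eq_pure (ENat.coe_ne_top n)]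
          exact eventually_pure.2 rfl
        have hnm : ((n : ℕ) : Sd) ≤ (m : Sd) := by
          have hfreq : ∃ᶠ s in rf T t, x s ≤ (m : Sd) := frequently_mem_iff_neBot.2 hGne
          obtain ⟨s, e1, e2⟩ := (hfreq.and_eventually hevn).exists
          exact e2 ▸ e1
        exact StmtFourAux.right_aux hx ht hxt hnm (hevn.mono fun s hs _ => hs)
      · have hnm : ((n : ℕ) : Sd) ≤ (m : Sd) := StmtFourAux.pair_le hp hGne
        exact StmtFourAux.right_aux hx ht hxt hnm (StmtFourAux.pair_eventually_eq hp)
  · -- left limits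
    show ∃ L, Tendsto (Rm T m x) (lf T t) (𝓝 L)
    by_cases hA : ∃ ε > 0, ∀ s, t - ε < s → s < t → 0 ≤ s → ¬ x s ≤ (m : Sd)
    · obtain ⟨ε, hε, hAs⟩ := hA
      set u0 := max (t - ε / 2) (t / 2) with hu0def
      have hu01 : u0 < t := max_lt (by linarith) (by linarith [ht.1])
      have hu02 : 0 ≤ u0 := le_trans (by linarith [ht.1] : (0 : ℝ) ≤ t / 2) (le_max_right _ _)
      have hu03 : t - ε < u0 := lt_of_lt_of_le (by linarith) (le_max_left _ _)
      refine ⟨Rm T m x u0, ?_⟩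
      have hevR : ∀ᶠ u in lf T t, Rm T m x u = Rm T m x u0 := by
        rw [lf, eventually_nhdsWithin_iff, Metric.eventually_nhds_iff]
        refine ⟨ε, hε, fun u hdu hu => ?_⟩
        have hult : u < t := hu.2
        have h1 : t - ε < u := by
          rw [Real.dist_eq, abs_of_neg (by linarith)] at hdu
          linarith
        rcases le_total u0 u with hc | hc
        · exact StmtFourAux.srec_congr hc
            (fun s hs1 hs2 => hAs s (by linarith) (lt_of_le_of_lt hs2 hult)
              (le_of_lt (lt_of_le_of_lt hu02 hs1)))
        · exact (StmtFourAux.srec_congr hc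
            (fun s hs1 hs2 => hAs s (by linarith) (lt_of_le_of_lt hs2 hu01)
              (le_trans hu.1.1 hs1.le))).symm
      exact Tendsto.congr' (hevR.mono fun u h => h.symm) tendsto_const_nhds
    · push_neg at hA
      have hHne : ((lf T t) ⊓ 𝓟 {s | x s ≤ (m : Sd)}).NeBot := by
        rw [lf, ← nhdsWithin_inter']
        apply StmtFourAux.neBot_within
        intro ε hε
        obtain ⟨s, h1, h2, h3, h4⟩ := hA ε hε
        refine ⟨s, ⟨⟨⟨h3, h2.le.trans ht.2⟩, h2⟩, h4⟩, ?_⟩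
        rw [abs_sub_lt_iff]
        constructor <;> linarith
      rcases hx.2 t ht with ⟨L, hL⟩ | ⟨n, hp⟩
      · have hLm : L ≤ (m : Sd) := StmtFourAux.lim_le hL hHne
        have hLne : L ≠ ⊤ := fun h => ENat.coe_ne_top m (top_le_iff.1 (h ▸ hLm))
        lift L to ℕ using hLne with n hn
        have hL' : Tendsto x (lf T t) (𝓝 ((n : ℕ) : Sd)) := hL
        have hevn : ∀ᶠ s in lf T t, x s = ((n : ℕ) : Sd) := by
          refine hL'.eventually (p := fun y => y = ((n : ℕ) : Sd)) ?_
          rw [ENat.nhds_eq_pure (ENat.coe_ne_top n)]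
          exact eventually_pure.2 rfl
        exact StmtFourAux.left_aux hx ht hA (hevn.mono fun s hs _ => hs)
      · exact StmtFourAux.left_aux hx ht hA (StmtFourAux.pair_eventually_eq hp)
end
end

section
/- For every x in 𝔼([0,T], S_d), the trajectory R_∞ x (which records the last site in ℕ visited) belongs to E([0,T], S_d). -/
open Filter Topology Set

noncomputable section
namespace SoftAux

open Soft Filter Topology Set

lemma Sd_cases (k : Sd) : k = ⊤ ∨ ∃ m : ℕ, k = (m : Sd) := by
  cases k with
  | none => exact Or.inl rfl
  | some m => exact Or.inr ⟨m, rfl⟩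

lemma isClosed_of_top_mem {C : Set Sd} (h : ⊤ ∈ C) : IsClosed C := by
  rw [← isOpen_compl_iff, isOpen_iff_mem_nhds]
  intro k hk
  have hk' : k ≠ ⊤ := fun e => hk (e ▸ h)
  rw [ENat.mem_nhds_iff hk']
  exact hk

lemma neBot_lf {T t : ℝ} (h0 : 0 < t) (hT : t ≤ T) : (lf T t).NeBot := by
  have hsub : Set.Ico 0 t ⊆ Set.Icc 0 T ∩ Set.Iio t := fun s hs =>
    ⟨⟨hs.1, le_trans (le_of_lt hs.2) hT⟩, hs.2⟩
  have h1 : t ∈ closure (Set.Ico (0:ℝ) t) := by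
    rw [closure_Ico (ne_of_lt h0)]
    exact ⟨le_of_lt h0, le_rfl⟩
  exact mem_closure_iff_nhdsWithin_neBot.1 (closure_mono hsub h1)

lemma eventually_ne_of_not_mapClusterPt {F : Filter ℝ} {f : ℝ → Sd} {m : Sd}
    (h : ¬ MapClusterPt m F f) : ∀ᶠ a in F, f a ≠ m := by
  by_contra hc
  apply h
  rw [mapClusterPt_iff_frequently]
  intro s hs
  have hm : m ∈ s := mem_of_mem_nhds hs
  exact (Filter.not_eventually.1 hc).mono fun a ha => (not_not.1 ha).symm ▸ hm

lemma mapClusterPt_mem_closed {F : Filter ℝ} {f : ℝ → Sd} {L : Sd} {C : Set Sd}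
    (h : MapClusterPt L F f) (hev : ∀ᶠ a in F, f a ∈ C) (hC : IsClosed C) : L ∈ C := by
  have h1 : map f F ≤ 𝓟 C := le_principal_iff.2 (mem_map.2 hev)
  have h2 : ClusterPt L (𝓟 C) := h.clusterPt.mono h1
  rwa [← hC.closure_eq, mem_closure_iff_clusterPt]

lemma mem_pair_of_forall {L : Sd} {n : ℕ}
    (h : ∀ N : ℕ, L ∈ insert ((n:ℕ) : Sd) (Set.Ioi (N : Sd))) : L = (n : Sd) ∨ L = ⊤ := by
  rcases Sd_cases L with rfl | ⟨m, rfl⟩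
  · exact Or.inr rfl
  · rcases h m with h' | h'
    · exact Or.inl h'
    · exact absurd h' (by simp)

lemma eventually_pair {F : Filter ℝ} {f : ℝ → Sd} {n : ℕ}
    (hK : {L : Sd | MapClusterPt L F f} = {(n : Sd), ⊤}) (N : ℕ) :
    ∀ᶠ s in F, f s ∈ insert ((n:ℕ) : Sd) (Set.Ioi (N : Sd)) := by
  have hAll : ∀ m ∈ Finset.range (N + 1), ∀ᶠ s in F, ((m:Sd) = (n:Sd)) ∨ f s ≠ (m:Sd) := by
    intro m _
    by_cases hmn : (m : Sd) = (n : Sd)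
    · exact Filter.Eventually.of_forall fun s => Or.inl hmn
    · have hnc : ¬ MapClusterPt (m : Sd) F f := by
        intro hc
        have hmem : (m:Sd) ∈ ({(n : Sd), ⊤} : Set Sd) := hK ▸ hc
        rcases hmem with h' | h'
        · exact hmn h'
        · exact ENat.coe_ne_top m h'
      exact (eventually_ne_of_not_mapClusterPt hnc).mono fun s hs => Or.inr hs
  have hfin := (Filter.eventually_all_finset (Finset.range (N+1))).2 hAll
  refine hfin.mono fun s hs => ?_
  rcases Sd_cases (f s) with htop | ⟨m, hm⟩
  · exact Or.inr (by rw [htop]; exact Ne.lt_top (ENat.coe_ne_top N))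
  · by_cases hmn : (m : Sd) = (n:Sd)
    · exact Or.inl (hm.trans hmn)
    · by_cases hmN : m ≤ N
      · rcases hs m (Finset.mem_range.2 (Nat.lt_succ_of_le hmN)) with h' | h'
        · exact absurd h' hmn
        · exact absurd hm h'
      · refine Or.inr ?_
        rw [hm, Set.mem_Ioi]
        exact_mod_cast Nat.lt_of_not_le hmN

lemma cluster_trichotomy {F : Filter ℝ} {f : ℝ → Sd} {n : ℕ}
    (hsub : ∀ L : Sd, MapClusterPt L F f → (L = (n:Sd) ∨ L = ⊤)) :
    Tendsto f F (𝓝 ⊤) ∨ Tendsto f F (𝓝 (n:Sd)) ∨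
      {L : Sd | MapClusterPt L F f} = {(n:Sd), ⊤} := by
  by_cases hn : MapClusterPt ((n:ℕ):Sd) F f
  · by_cases htop : MapClusterPt (⊤:Sd) F f
    · refine Or.inr (Or.inr ?_)
      ext L
      constructor
      · intro h
        rcases hsub L h with h' | h'
        · exact Or.inl h'
        · exact Or.inr h'
      · rintro (h | h) <;> rw [Set.mem_setOf_eq, h]
        · exact hn
        · exact htop
    · refine Or.inr (Or.inl ?_)
      exact tendsto_nhds_of_unique_mapClusterPt fun L hL => by
        rcases hsub L hL with h | h
        · exact h
        · exact absurd (h ▸ hL) htop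
  · refine Or.inl ?_
    exact tendsto_nhds_of_unique_mapClusterPt fun L hL => by
      rcases hsub L hL with h | h
      · exact absurd (h ▸ hL) hn
      · exact h

lemma srec_at_visit {T t : ℝ} {x : ℝ → Sd} (ht : 0 ≤ t) (h : x t ≠ ⊤) :
    Rinf T x t = x t := by
  have hEx : ∃ s ∈ Set.Icc 0 t, x s ≠ ⊤ := ⟨t, ⟨ht, le_rfl⟩, h⟩
  have hlv : lastVisit (fun k => k ≠ ⊤) x t = t := by
    apply le_antisymm
    · exact csSup_le ⟨t, ⟨⟨ht, le_rfl⟩, h⟩⟩ (fun s hs => hs.1.2)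
    · exact le_csSup ⟨t, fun s hs => hs.1.2⟩ ⟨⟨ht, le_rfl⟩, h⟩
  rw [Rinf, srec, if_pos hEx, hlv, if_pos h]

lemma srec_eq_of_no_visit {T a u : ℝ} {x : ℝ → Sd} (hau : a ≤ u)
    (h : ∀ s ∈ Set.Ioc a u, x s = ⊤) :
    Rinf T x u = Rinf T x a := by
  have hset : {s | s ∈ Set.Icc 0 u ∧ x s ≠ ⊤} = {s | s ∈ Set.Icc 0 a ∧ x s ≠ ⊤} := by
    ext s
    constructor
    · rintro ⟨⟨h0, hu⟩, hs⟩
      refine ⟨⟨h0, ?_⟩, hs⟩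
      by_contra hc
      push_neg at hc
      exact hs (h s ⟨hc, hu⟩)
    · rintro ⟨⟨h0, hsa⟩, hs⟩
      exact ⟨⟨h0, le_trans hsa hau⟩, hs⟩
  have hlv : lastVisit (fun k => k ≠ ⊤) x u = lastVisit (fun k => k ≠ ⊤) x a := by
    rw [lastVisit, lastVisit]
    exact congrArg sSup hset
  have hex : (∃ s ∈ Set.Icc 0 u, x s ≠ ⊤) ↔ (∃ s ∈ Set.Icc 0 a, x s ≠ ⊤) := by
    constructor
    · rintro ⟨s, hs1, hs2⟩
      exact ⟨s, ((Set.ext_iff.1 hset s).1 ⟨hs1, hs2⟩).1, hs2⟩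
    · rintro ⟨s, hs1, hs2⟩
      exact ⟨s, ⟨hs1.1, le_trans hs1.2 hau⟩, hs2⟩
  rw [Rinf, srec, srec, hlv]
  by_cases hc : ∃ s ∈ Set.Icc 0 a, x s ≠ ⊤
  · rw [if_pos (hex.2 hc), if_pos hc]
  · rw [if_neg (fun hh => hc (hex.1 hh)), if_neg hc]

lemma srec_mem_closed {T : ℝ} {x : ℝ → Sd} (hx : memBbE T x) {C : Set Sd} (hC : IsClosed C)
    {a u : ℝ} (ha : 0 ≤ a) (huT : u ≤ T)
    (hv : ∃ v ∈ Set.Ioc a u, x v ≠ ⊤)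
    (hxC : ∀ s ∈ Set.Ioc a u, x s ∈ C) :
    Rinf T x u ∈ C := by
  obtain ⟨v, hvmem, hvvis⟩ := hv
  have hvS : v ∈ {s | s ∈ Set.Icc 0 u ∧ x s ≠ ⊤} :=
    ⟨⟨le_trans ha (le_of_lt hvmem.1), hvmem.2⟩, hvvis⟩
  have hbdd : BddAbove {s | s ∈ Set.Icc 0 u ∧ x s ≠ ⊤} := ⟨u, fun s hs => hs.1.2⟩
  have hEx : ∃ s ∈ Set.Icc 0 u, x s ≠ ⊤ := ⟨v, hvS.1, hvS.2⟩
  have hσu : lastVisit (fun k => k ≠ ⊤) x u ≤ u := csSup_le ⟨v, hvS⟩ (fun s hs => hs.1.2)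
  have hσv : v ≤ lastVisit (fun k => k ≠ ⊤) x u := le_csSup hbdd hvS
  have hσa : a < lastVisit (fun k => k ≠ ⊤) x u := lt_of_lt_of_le hvmem.1 hσv
  have hσ0 : 0 < lastVisit (fun k => k ≠ ⊤) x u := lt_of_le_of_lt ha hσa
  rw [Rinf, srec, if_pos hEx]
  set σ := lastVisit (fun k => k ≠ ⊤) x u with hσdef
  by_cases hP : x σ ≠ ⊤
  · rw [if_pos hP]
    exact hxC σ ⟨hσa, hσu⟩
  · rw [if_neg hP]
    haveI hnb : (lf T σ).NeBot := neBot_lf hσ0 (le_trans hσu huT)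
    have hev : ∀ᶠ s in lf T σ, x s ∈ C := by
      have h1 : ∀ᶠ s in lf T σ, a < s :=
        (eventually_gt_nhds hσa).filter_mono nhdsWithin_le_nhds
      have h2 : ∀ᶠ s in lf T σ, s ∈ Set.Icc 0 T ∩ Set.Iio σ := eventually_mem_nhdsWithin
      filter_upwards [h1, h2] with s hs1 hs2
      exact hxC s ⟨hs1, le_trans (le_of_lt hs2.2) hσu⟩
    by_cases h1 : ∃ L, leftLim T x σ L
    · rw [dif_pos h1]
      exact hC.mem_of_tendsto h1.choose_spec hev
    · rw [dif_neg h1]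
      by_cases h2 : ∃ n : ℕ, softLeftPair T x σ n
      · rw [dif_pos h2]
        have hmem : MapClusterPt ((h2.choose : ℕ) : Sd) (lf T σ) x :=
          (Set.ext_iff.1 h2.choose_spec ((h2.choose : ℕ) : Sd)).2 (Set.mem_insert _ _)
        exact mapClusterPt_mem_closed hmem hev hC
      · rw [dif_neg h2]
        rcases hx.2 σ ⟨hσ0, le_trans hσu huT⟩ with h | h
        · exact absurd h h1
        · exact absurd h h2

lemma eventually_right {T t : ℝ} {x : ℝ → Sd} (hx : memBbE T x) (ht0 : 0 ≤ t)
    (hB : ∀ ε > 0, ∃ v, v ∈ Set.Ioc t (t + ε) ∧ v ≤ T ∧ x v ≠ ⊤)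
    {C : Set Sd} (hC : IsClosed C) (h : ∀ᶠ s in rf T t, x s ∈ C) :
    ∀ᶠ s in rf T t, Rinf T x s ∈ C := by
  rw [Filter.eventually_iff, rf] at h
  obtain ⟨δ, hδ, hsub⟩ := Metric.mem_nhdsWithin_iff.1 h
  have h1 : ∀ᶠ s in rf T t, s ∈ Metric.ball t δ :=
    (Metric.isOpen_ball.eventually_mem (Metric.mem_ball_self hδ)).filter_mono
      nhdsWithin_le_nhds
  have h2 : ∀ᶠ s in rf T t, s ∈ Set.Icc 0 T ∩ Set.Ioi t := eventually_mem_nhdsWithin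
  filter_upwards [h1, h2] with s hs1 hs2
  have hst : t < s := hs2.2
  have hsT : s ≤ T := hs2.1.2
  have hsδ : s - t < δ := by
    have := hs1
    rw [Metric.mem_ball, Real.dist_eq, abs_lt] at this
    linarith [this.2]
  obtain ⟨v, hvI, hvT, hvvis⟩ := hB (s - t) (by linarith)
  have hvI' : v ∈ Set.Ioc t s := ⟨hvI.1, by linarith [hvI.2]⟩
  apply srec_mem_closed hx hC ht0 hsT ⟨v, hvI', hvvis⟩
  intro s' hs'
  apply hsub
  refine ⟨?_, ⟨le_trans ht0 (le_of_lt hs'.1), le_trans hs'.2 hsT⟩, hs'.1⟩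
  rw [Metric.mem_ball, Real.dist_eq, abs_lt]
  constructor <;> [linarith [hs'.1]; linarith [hs'.2]]

lemma eventually_left {T t : ℝ} {x : ℝ → Sd} (hx : memBbE T x) (ht0 : 0 < t) (htT : t ≤ T)
    (hB : ∀ ε > 0, ∃ v, v ∈ Set.Ioo (t - ε) t ∧ 0 ≤ v ∧ x v ≠ ⊤)
    {C : Set Sd} (hC : IsClosed C) (h : ∀ᶠ s in lf T t, x s ∈ C) :
    ∀ᶠ s in lf T t, Rinf T x s ∈ C := by
  rw [Filter.eventually_iff, lf] at h
  obtain ⟨δ, hδ, hsub⟩ := Metric.mem_nhdsWithin_iff.1 h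
  have hε : 0 < min δ t := lt_min hδ ht0
  obtain ⟨v, hvI, hv0, hvvis⟩ := hB (min δ t) hε
  have hvt : v < t := hvI.2
  have hva : t - δ ≤ t - min δ t := by
    have := min_le_left δ t
    linarith
  have hv1 : (0:ℝ) ≤ t - min δ t := by
    have := min_le_right δ t
    linarith
  have h1 : ∀ᶠ s in lf T t, v < s :=
    (eventually_gt_nhds hvt).filter_mono nhdsWithin_le_nhds
  have h2 : ∀ᶠ s in lf T t, s ∈ Set.Icc 0 T ∩ Set.Iio t := eventually_mem_nhdsWithin
  filter_upwards [h1, h2] with s hs1 hs2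
  apply srec_mem_closed hx hC hv1 hs2.1.2 ⟨v, ⟨hvI.1, le_of_lt hs1⟩, hvvis⟩
  intro s' hs'
  apply hsub
  have hs't : s' < t := lt_of_le_of_lt hs'.2 hs2.2
  refine ⟨?_, ⟨le_trans hv1 (le_of_lt hs'.1), le_trans (le_of_lt hs't) htT⟩, hs't⟩
  rw [Metric.mem_ball, Real.dist_eq, abs_lt]
  constructor <;> [linarith [hs'.1, hva]; linarith]

end SoftAux

open Soft Filter Topology in
/-- For every `x ∈ 𝔼([0,T], S_d)`, the trajectory `R_∞ x` belongs to `E([0,T], S_d)`. -/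
theorem stmt5 (T : ℝ) (hT : 0 < T) (x : ℝ → Soft.Sd) (hx : Soft.memBbE T x) :
    Soft.memE T (Soft.Rinf T x) := by
  classical
  refine ⟨⟨?_, ?_⟩, ?_, ?_⟩
  · -- soft right continuity of Rinf T x
    intro t ht
    by_cases hB : ∀ ε > 0, ∃ v, v ∈ Set.Ioc t (t + ε) ∧ v ≤ T ∧ x v ≠ ⊤
    · have hxrc := hx.1 t ht
      unfold softRightCont at hxrc ⊢
      rcases hxrc with hr | ⟨n, hn, hxt⟩ | ⟨n, hpair, hxt⟩
      · left
        unfold rightLim at hr ⊢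
        rw [ENat.tendsto_nhds_top_iff_natCast_lt] at hr ⊢
        intro N
        have hev : ∀ᶠ s in rf T t, x s ∈ Set.Ioi ((N:ℕ) : Sd) := (hr N).mono fun s hs => hs
        exact (SoftAux.eventually_right hx ht.1 hB
          (SoftAux.isClosed_of_top_mem (Set.mem_Ioi.2 (Ne.lt_top (ENat.coe_ne_top N)))) hev).mono
          fun s hs => hs
      · have hyt : Rinf T x t = (n:Sd) := by
          rw [SoftAux.srec_at_visit ht.1 (by rw [hxt]; exact ENat.coe_ne_top n), hxt]
        right; left
        refine ⟨n, ?_, hyt⟩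
        unfold rightLim at hn ⊢
        rw [ENat.nhds_eq_pure (ENat.coe_ne_top n), tendsto_pure] at hn ⊢
        have hev : ∀ᶠ s in rf T t, x s ∈ ({(n:Sd)} : Set Sd) := hn.mono fun s hs => hs
        exact (SoftAux.eventually_right hx ht.1 hB isClosed_singleton hev).mono fun s hs => hs
      · have hyt : Rinf T x t = (n:Sd) := by
          rw [SoftAux.srec_at_visit ht.1 (by rw [hxt]; exact ENat.coe_ne_top n), hxt]
        unfold softRightPair at hpair
        have hKy : ∀ L : Sd, MapClusterPt L (rf T t) (Rinf T x) → (L = (n:Sd) ∨ L = ⊤) := by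
          intro L hL
          apply SoftAux.mem_pair_of_forall (n := n)
          intro N
          have hcl : IsClosed (insert ((n:ℕ):Sd) (Set.Ioi ((N:ℕ):Sd))) :=
            SoftAux.isClosed_of_top_mem (Set.mem_insert_iff.2
              (Or.inr (Set.mem_Ioi.2 (Ne.lt_top (ENat.coe_ne_top N)))))
          exact SoftAux.mapClusterPt_mem_closed hL
            (SoftAux.eventually_right hx ht.1 hB hcl (SoftAux.eventually_pair hpair N)) hcl
        rcases SoftAux.cluster_trichotomy hKy with h | h | h
        · exact Or.inl h
        · exact Or.inr (Or.inl ⟨n, h, hyt⟩)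
        · exact Or.inr (Or.inr ⟨n, h, hyt⟩)
    · push_neg at hB
      obtain ⟨ε, hε, hno⟩ := hB
      have hconst : ∀ᶠ s in rf T t, Rinf T x s = Rinf T x t := by
        have h1 : ∀ᶠ s in rf T t, s < t + ε :=
          (eventually_lt_nhds (by linarith)).filter_mono nhdsWithin_le_nhds
        have h2 : ∀ᶠ s in rf T t, s ∈ Set.Icc 0 T ∩ Set.Ioi t := eventually_mem_nhdsWithin
        filter_upwards [h1, h2] with s hs1 hs2
        exact SoftAux.srec_eq_of_no_visit (le_of_lt hs2.2) fun v hv =>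
          hno v ⟨hv.1, le_trans hv.2 (le_of_lt hs1)⟩ (le_trans hv.2 hs2.1.2)
      have htend : Tendsto (Rinf T x) (rf T t) (𝓝 (Rinf T x t)) :=
        tendsto_const_nhds.congr' (hconst.mono fun s hs => hs.symm)
      rcases SoftAux.Sd_cases (Rinf T x t) with hyt | ⟨n, hyt⟩
      · rw [hyt] at htend
        exact Or.inl htend
      · rw [hyt] at htend
        exact Or.inr (Or.inl ⟨n, htend, hyt⟩)
  · -- soft left limits of Rinf T x
    intro t ht
    by_cases hB : ∀ ε > 0, ∃ v, v ∈ Set.Ioo (t - ε) t ∧ 0 ≤ v ∧ x v ≠ ⊤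
    · have hxll := hx.2 t ht
      unfold softLeftLim at hxll ⊢
      rcases hxll with ⟨L, hL⟩ | ⟨n, hpair⟩
      · rcases SoftAux.Sd_cases L with rfl | ⟨n, rfl⟩
        · refine Or.inl ⟨⊤, ?_⟩
          unfold leftLim at hL ⊢
          rw [ENat.tendsto_nhds_top_iff_natCast_lt] at hL ⊢
          intro N
          have hev : ∀ᶠ s in lf T t, x s ∈ Set.Ioi ((N:ℕ):Sd) := (hL N).mono fun s hs => hs
          exact (SoftAux.eventually_left hx ht.1 ht.2 hB
            (SoftAux.isClosed_of_top_mem (Set.mem_Ioi.2 (Ne.lt_top (ENat.coe_ne_top N)))) hev).mono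
            fun s hs => hs
        · refine Or.inl ⟨(n:Sd), ?_⟩
          unfold leftLim at hL ⊢
          rw [ENat.nhds_eq_pure (ENat.coe_ne_top n), tendsto_pure] at hL ⊢
          have hev : ∀ᶠ s in lf T t, x s ∈ ({(n:Sd)} : Set Sd) := hL.mono fun s hs => hs
          exact (SoftAux.eventually_left hx ht.1 ht.2 hB isClosed_singleton hev).mono
            fun s hs => hs
      · unfold softLeftPair at hpair
        have hKy : ∀ L : Sd, MapClusterPt L (lf T t) (Rinf T x) → (L = (n:Sd) ∨ L = ⊤) := by
          intro L hL
          apply SoftAux.mem_pair_of_forall (n := n)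
          intro N
          have hcl : IsClosed (insert ((n:ℕ):Sd) (Set.Ioi ((N:ℕ):Sd))) :=
            SoftAux.isClosed_of_top_mem (Set.mem_insert_iff.2
              (Or.inr (Set.mem_Ioi.2 (Ne.lt_top (ENat.coe_ne_top N)))))
          exact SoftAux.mapClusterPt_mem_closed hL
            (SoftAux.eventually_left hx ht.1 ht.2 hB hcl (SoftAux.eventually_pair hpair N)) hcl
        rcases SoftAux.cluster_trichotomy hKy with h | h | h
        · exact Or.inl ⟨⊤, h⟩
        · exact Or.inl ⟨(n:Sd), h⟩
        · exact Or.inr ⟨n, h⟩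
    · push_neg at hB
      obtain ⟨ε, hε, hno⟩ := hB
      have hconst : ∀ᶠ s in lf T t, Rinf T x s = Rinf T x (max (t - ε) 0) := by
        have h1 : ∀ᶠ s in lf T t, t - ε < s :=
          (eventually_gt_nhds (by linarith)).filter_mono nhdsWithin_le_nhds
        have h2 : ∀ᶠ s in lf T t, s ∈ Set.Icc 0 T ∩ Set.Iio t := eventually_mem_nhdsWithin
        filter_upwards [h1, h2] with s hs1 hs2
        refine SoftAux.srec_eq_of_no_visit (max_le (le_of_lt hs1) hs2.1.1) fun v hv => ?_
        exact hno v ⟨lt_of_le_of_lt (le_max_left (t-ε) 0) hv.1, lt_of_le_of_lt hv.2 hs2.2⟩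
          (le_trans (le_max_right (t-ε) 0) (le_of_lt hv.1))
      exact Or.inl ⟨Rinf T x (max (t - ε) 0),
        tendsto_const_nhds.congr' (hconst.mono fun s hs => hs.symm)⟩
  · -- Rinf T x 0 ≠ ⊤
    by_cases h0 : x 0 = ⊤
    · have hno : ¬ ∃ s ∈ Set.Icc (0:ℝ) 0, x s ≠ ⊤ := by
        rintro ⟨s, hs, hne⟩
        refine hne ?_
        rw [le_antisymm hs.2 hs.1]
        exact h0
      unfold Rinf srec
      rw [if_neg hno]
      simp
    · rw [SoftAux.srec_at_visit le_rfl h0]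
      exact h0
  · -- the ∞-visit structure
    intro t ht hyt
    have hyt0 := hyt
    have hEx : ∃ s ∈ Set.Icc 0 t, x s ≠ ⊤ := by
      by_contra hc
      unfold Rinf srec at hyt
      rw [if_neg hc] at hyt
      exact absurd hyt (by simp)
    unfold Rinf srec at hyt
    rw [if_pos hEx] at hyt
    set σ := lastVisit (fun k => k ≠ ⊤) x t with hσdef
    have hSne : {s | s ∈ Set.Icc 0 t ∧ x s ≠ ⊤}.Nonempty := by
      obtain ⟨s, hs1, hs2⟩ := hEx
      exact ⟨s, hs1, hs2⟩
    have hbdd : BddAbove {s | s ∈ Set.Icc 0 t ∧ x s ≠ ⊤} := ⟨t, fun s hs => hs.1.2⟩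
    have hσt : σ ≤ t := csSup_le hSne (fun s hs => hs.1.2)
    by_cases hxσ : x σ ≠ ⊤
    · rw [if_pos hxσ] at hyt
      exact absurd hyt hxσ
    rw [if_neg hxσ] at hyt
    push_neg at hxσ
    have hlt : ∀ s ∈ {s | s ∈ Set.Icc 0 t ∧ x s ≠ ⊤}, s < σ := fun s hs =>
      lt_of_le_of_ne (le_csSup hbdd hs) (fun e => hs.2 (e ▸ hxσ))
    have hσ0 : 0 < σ := by
      obtain ⟨s, hs⟩ := hSne
      exact lt_of_le_of_lt hs.1.1 (hlt s hs)
    have hacc : ∀ ε > 0, ∃ v, v ∈ Set.Ioo (σ - ε) σ ∧ 0 ≤ v ∧ x v ≠ ⊤ := by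
      intro ε hεp
      obtain ⟨s, hs, hgt⟩ := exists_lt_of_lt_csSup hSne (by linarith : σ - ε < σ)
      exact ⟨s, ⟨hgt, hlt s hs⟩, hs.1.1, hs.2⟩
    haveI : (lf T σ).NeBot := SoftAux.neBot_lf hσ0 (le_trans hσt ht.2)
    have hL : Tendsto x (lf T σ) (𝓝 ⊤) := by
      by_cases h1 : ∃ L, leftLim T x σ L
      · rw [dif_pos h1] at hyt
        have hsp := h1.choose_spec
        unfold leftLim at hsp
        exact (congrArg (fun L => Tendsto x (lf T σ) (𝓝 L)) hyt).mp hsp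
      · rw [dif_neg h1] at hyt
        by_cases h2 : ∃ n : ℕ, softLeftPair T x σ n
        · rw [dif_pos h2] at hyt
          exact absurd hyt (ENat.coe_ne_top _)
        · rw [dif_neg h2] at hyt
          exact absurd hyt (by simp)
    have hyconst : ∀ s, σ ≤ s → s ≤ t → Rinf T x s = Rinf T x t := by
      intro s hσs hst
      refine (SoftAux.srec_eq_of_no_visit hst fun v hv => ?_).symm
      by_contra hvv
      have hvS : v ∈ {s | s ∈ Set.Icc 0 t ∧ x s ≠ ⊤} :=
        ⟨⟨le_trans (le_trans (le_of_lt hσ0) hσs) (le_of_lt hv.1), hv.2⟩, hvv⟩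
      exact absurd (hlt v hvS) (not_lt.2 (le_trans hσs (le_of_lt hv.1)))
    have hyσ : Rinf T x σ = ⊤ := by
      rw [hyconst σ le_rfl hσt]
      exact hyt0
    have hyvis : ∀ s ∈ {s | s ∈ Set.Icc 0 t ∧ x s ≠ ⊤},
        s ∈ {s | s ∈ Set.Icc 0 t ∧ Rinf T x s ≠ ⊤} := fun s hs =>
      ⟨hs.1, by rw [SoftAux.srec_at_visit hs.1.1 hs.2]; exact hs.2⟩
    have hWy : sigmaInf (Rinf T x) t = σ := by
      show sSup {s | s ∈ Set.Icc 0 t ∧ Rinf T x s ≠ ⊤} = σ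
      apply le_antisymm
      · refine csSup_le ⟨hSne.some, hyvis _ hSne.some_mem⟩ fun w hw => ?_
        by_contra hc
        push_neg at hc
        refine hw.2 ?_
        rw [hyconst w (le_of_lt hc) hw.1.2]
        exact hyt0
      · exact csSup_le_csSup ⟨t, fun s hs => hs.1.2⟩ hSne hyvis
    refine ⟨hWy ▸ hσ0, ?_, ?_⟩
    · rw [hWy]
      exact hyσ
    · rw [hWy]
      show Tendsto (Rinf T x) (lf T σ) (𝓝 ⊤)
      rw [ENat.tendsto_nhds_top_iff_natCast_lt]
      intro N
      have hev : ∀ᶠ s in lf T σ, x s ∈ Set.Ioi ((N:ℕ):Sd) :=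
        ((ENat.tendsto_nhds_top_iff_natCast_lt.1 hL) N).mono fun s hs => hs
      exact (SoftAux.eventually_left hx hσ0 (le_trans hσt ht.2) hacc
        (SoftAux.isClosed_of_top_mem (Set.mem_Ioi.2 (Ne.lt_top (ENat.coe_ne_top N)))) hev).mono
        fun s hs => hs
end
end

section
/- For every trajectory x in E([0,T], S_d), R_∞ x = x; consequently R_∞ : 𝔼([0,T], S_d) → E([0,T], S_d) is a projection (idempotent onto E). -/
open Filter Topology Set

noncomputable section
namespace SoftProof
open Soft Filter Topology Set

/-! ### Topology facts on `ℕ∞` -/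

lemma isClosed_Ioi_nat (N : ℕ) : IsClosed (Ioi (N : Sd)) := by
  have h : Ioi (N : Sd) = Ici ((N + 1 : ℕ) : Sd) := by
    ext k
    simp only [mem_Ioi, mem_Ici, Nat.cast_add, Nat.cast_one]
    exact ((ENat.add_one_le_iff (by simp)).trans Iff.rfl).symm
  rw [h]; exact isClosed_Ici

section Cluster

variable {l : Filter ℝ} {x : ℝ → Sd}

lemma mapClusterPt_coe_iff {n : ℕ} :
    MapClusterPt ((n : ℕ) : Sd) l x ↔ ∃ᶠ s in l, x s = (n : Sd) := by
  rw [mapClusterPt_iff_frequently]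
  constructor
  · intro h
    have := h {((n : ℕ) : Sd)} (by rw [ENat.mem_nhds_iff (by simp)]; exact rfl)
    simpa using this
  · intro h s hs
    have hn : ((n : ℕ) : Sd) ∈ s := by rwa [ENat.mem_nhds_iff (by simp)] at hs
    exact h.mono fun a ha => ha ▸ hn

lemma mapClusterPt_top_iff :
    MapClusterPt (⊤ : Sd) l x ↔ ∀ N : ℕ, ∃ᶠ s in l, (N : Sd) < x s := by
  rw [nhds_top_basis.mapClusterPt_iff_frequently]
  constructor
  · intro h N
    exact h (N : Sd) (by simp)
  · intro h a ha
    lift a to ℕ using ha.ne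
    exact h a

lemma exists_mapClusterPt_mem [l.NeBot] {C : Set Sd} (hC : IsClosed C)
    (h : ∃ᶠ s in l, x s ∈ C) : ∃ L ∈ C, MapClusterPt L l x := by
  have hne : (Filter.map x l ⊓ 𝓟 C).NeBot := by
    rw [inf_principal_neBot_iff]
    intro U hU
    rw [Filter.frequently_iff] at h
    obtain ⟨s, hs, hsC⟩ := h hU
    exact ⟨x s, hs, hsC⟩
  obtain ⟨L, hL⟩ := exists_clusterPt_of_compactSpace (Filter.map x l ⊓ 𝓟 C)
  refine ⟨L, ?_, hL.mono inf_le_left⟩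
  have : ClusterPt L (𝓟 C) := hL.mono inf_le_right
  rw [← hC.closure_eq]
  exact mem_closure_iff_clusterPt.mpr this

lemma mapClusterPt_eq_of_tendsto [l.NeBot] {L L' : Sd}
    (h : Tendsto x l (𝓝 L)) (h' : MapClusterPt L' l x) : L' = L := by
  have h1 : (𝓝 L' ⊓ Filter.map x l).NeBot := h'
  have h2 : (𝓝 L' ⊓ 𝓝 L).NeBot := h1.mono (inf_le_inf_left _ h)
  exact t2_iff_nhds.mp inferInstance h2

lemma eventually_pair {n : ℕ}
    (hsub : ∀ L : Sd, MapClusterPt L l x → L = (n : Sd) ∨ L = ⊤) :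
    ∀ N : ℕ, ∀ᶠ s in l, x s = (n : Sd) ∨ (N : Sd) < x s := by
  have key : ∀ m : ℕ, m ≠ n → ∀ᶠ s in l, x s ≠ ((m : ℕ) : Sd) := by
    intro m hm
    by_contra hc
    rw [Filter.not_eventually] at hc
    have hc' : ∃ᶠ s in l, x s = ((m : ℕ) : Sd) := hc.mono fun s hs => not_not.mp hs
    rcases hsub _ (mapClusterPt_coe_iff.mpr hc') with h | h
    · exact hm (by exact_mod_cast h)
    · exact (by simp : ((m : ℕ) : Sd) ≠ ⊤) h
  intro N
  induction N with
  | zero =>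
    rcases eq_or_ne n 0 with rfl | h0
    · refine Eventually.of_forall fun s => ?_
      rcases eq_or_ne (x s) 0 with h | h
      · exact Or.inl (by simpa using h)
      · exact Or.inr (by simpa using pos_iff_ne_zero.mpr h)
    · refine (key 0 (Ne.symm h0)).mono fun s hs => Or.inr ?_
      simp only [Nat.cast_zero] at hs ⊢
      exact pos_iff_ne_zero.mpr hs
  | succ N ih =>
    have h2 : ∀ᶠ s in l, x s = (n : Sd) ∨ x s ≠ ((N + 1 : ℕ) : Sd) := by
      rcases eq_or_ne (N + 1) n with h | h
      · refine Eventually.of_forall fun s => ?_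
        rcases eq_or_ne (x s) ((n : ℕ) : Sd) with h' | h'
        · exact Or.inl h'
        · exact Or.inr (by rw [h]; exact h')
      · exact (key (N + 1) h).mono fun s hs => Or.inr hs
    filter_upwards [ih, h2] with s h1 h2
    rcases h1 with h1 | h1
    · exact Or.inl h1
    rcases h2 with h2 | h2
    · exact Or.inl h2
    · right
      have hle : (N : Sd) + 1 ≤ x s := (ENat.add_one_le_iff (by simp)).mpr h1
      have hle' : ((N + 1 : ℕ) : Sd) ≤ x s := by push_cast; exact hle
      exact lt_of_le_of_ne hle' (Ne.symm h2)

lemma trichotomy [l.NeBot] {n : ℕ}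
    (h : ∀ N : ℕ, ∀ᶠ s in l, x s = (n : Sd) ∨ (N : Sd) < x s) :
    Tendsto x l (𝓝 ⊤) ∨ Tendsto x l (𝓝 ((n : ℕ) : Sd)) ∨
      {L : Sd | MapClusterPt L l x} = {((n : ℕ) : Sd), ⊤} := by
  by_cases htop : Tendsto x l (𝓝 (⊤ : Sd))
  · exact Or.inl htop
  by_cases hn : Tendsto x l (𝓝 ((n : ℕ) : Sd))
  · exact Or.inr (Or.inl hn)
  refine Or.inr (Or.inr ?_)
  have hsub : ∀ L : Sd, MapClusterPt L l x → L = ((n : ℕ) : Sd) ∨ L = ⊤ := by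
    intro L hL
    by_contra hc
    push_neg at hc
    obtain ⟨h1, h2⟩ := hc
    lift L to ℕ using h2
    have hf : ∃ᶠ s in l, x s = ((L : ℕ) : Sd) := mapClusterPt_coe_iff.mp hL
    obtain ⟨s, hs1, hs2⟩ := (hf.and_eventually (h L)).exists
    rcases hs2 with hs2 | hs2
    · exact h1 (hs1 ▸ hs2)
    · rw [hs1] at hs2; exact lt_irrefl _ hs2
  have hnc : MapClusterPt ((n : ℕ) : Sd) l x := by
    rw [ENat.tendsto_nhds_top_iff_natCast_lt] at htop
    push_neg at htop
    obtain ⟨N, hN⟩ := htop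
    have hN : ∃ᶠ s in l, ¬ ((N : Sd) < x s) := hN.mono fun s hs => not_lt.mpr hs
    refine mapClusterPt_coe_iff.mpr ?_
    refine (hN.and_eventually (h N)).mono fun s hs => ?_
    rcases hs.2 with h1 | h1
    · exact h1
    · exact absurd h1 hs.1
  have htc : MapClusterPt (⊤ : Sd) l x := by
    rw [ENat.nhds_eq_pure (by simp), tendsto_pure, Filter.not_eventually] at hn
    refine mapClusterPt_top_iff.mpr fun N => ?_
    refine (hn.and_eventually (h N)).mono fun s hs => ?_
    rcases hs.2 with h1 | h1
    · exact absurd h1 hs.1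
    · exact h1
  ext L
  simp only [Set.mem_setOf_eq, Set.mem_insert_iff, Set.mem_singleton_iff]
  constructor
  · exact hsub L
  · rintro (rfl | rfl)
    · exact hnc
    · exact htc

end Cluster

/-! ### The filters `lf` and `rf` -/

lemma lf_basis (T t : ℝ) :
    (lf T t).HasBasis (fun δ : ℝ => 0 < δ) (fun δ => Ioo (t - δ) t ∩ Icc 0 T) := by
  refine (nhdsWithin_hasBasis (nhds_basis_Ioo_pos t) _).congr (fun _ => Iff.rfl) ?_
  intro δ hδ
  ext u
  simp only [mem_inter_iff, mem_Ioo, mem_Icc, mem_Iio]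
  constructor
  · rintro ⟨⟨h1, _⟩, ⟨h3, h4⟩, h5⟩
    exact ⟨⟨h1, h5⟩, h3, h4⟩
  · rintro ⟨⟨h1, h2⟩, h3, h4⟩
    exact ⟨⟨h1, by linarith⟩, ⟨h3, h4⟩, h2⟩

lemma rf_basis (T t : ℝ) :
    (rf T t).HasBasis (fun δ : ℝ => 0 < δ) (fun δ => Ioo t (t + δ) ∩ Icc 0 T) := by
  refine (nhdsWithin_hasBasis (nhds_basis_Ioo_pos t) _).congr (fun _ => Iff.rfl) ?_
  intro δ hδ
  ext u
  simp only [mem_inter_iff, mem_Ioo, mem_Icc, mem_Ioi]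
  constructor
  · rintro ⟨⟨_, h2⟩, ⟨h3, h4⟩, h5⟩
    exact ⟨⟨h5, h2⟩, h3, h4⟩
  · rintro ⟨⟨h1, h2⟩, h3, h4⟩
    exact ⟨⟨by linarith, h2⟩, ⟨h3, h4⟩, h1⟩

lemma lf_neBot {T t : ℝ} (h0 : 0 < t) (hT : t ≤ T) : (lf T t).NeBot := by
  rw [(lf_basis T t).neBot_iff]
  intro δ hδ
  refine ⟨max (t - δ / 2) (t / 2), ⟨?_, ?_⟩, ?_, ?_⟩
  · exact lt_of_lt_of_le (by linarith) (le_max_left _ _)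
  · exact max_lt (by linarith) (by linarith)
  · exact le_max_of_le_right (by linarith)
  · exact le_trans (le_of_lt (max_lt (by linarith) (by linarith))) hT

lemma rf_neBot {T t : ℝ} (h0 : 0 ≤ t) (hT : t < T) : (rf T t).NeBot := by
  rw [(rf_basis T t).neBot_iff]
  intro δ hδ
  refine ⟨min (t + δ / 2) ((t + T) / 2), ⟨?_, ?_⟩, ?_, ?_⟩
  · exact lt_min (by linarith) (by linarith)
  · exact lt_of_le_of_lt (min_le_left _ _) (by linarith)
  · exact le_trans h0 (le_of_lt (lt_min (by linarith) (by linarith)))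
  · exact le_trans (min_le_right _ _) (by linarith)

lemma rf_bot (T : ℝ) : rf T T = ⊥ := by
  have h : Icc (0:ℝ) T ∩ Ioi T = ∅ :=
    Set.eq_empty_iff_forall_notMem.mpr fun u hu => absurd hu.1.2 (not_le.mpr hu.2)
  rw [rf, h, nhdsWithin_empty]

lemma eventually_lf {T t δ : ℝ} (hδ : 0 < δ) :
    ∀ᶠ u in lf T t, t - δ < u ∧ u < t ∧ 0 ≤ u ∧ u ≤ T := by
  rw [(lf_basis T t).eventually_iff]
  exact ⟨δ, hδ, fun u hu => ⟨hu.1.1, hu.1.2, hu.2.1, hu.2.2⟩⟩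

lemma eventually_rf {T t δ : ℝ} (hδ : 0 < δ) :
    ∀ᶠ u in rf T t, t < u ∧ u < t + δ ∧ 0 ≤ u ∧ u ≤ T := by
  rw [(rf_basis T t).eventually_iff]
  exact ⟨δ, hδ, fun u hu => ⟨hu.1.1, hu.1.2, hu.2.1, hu.2.2⟩⟩

/-! ### Evaluation of the record operator -/

section Eval

variable {T : ℝ} {x : ℝ → Sd} {t t' : ℝ}

lemma visit_bddAbove (x : ℝ → Sd) (t : ℝ) :
    BddAbove {s | s ∈ Icc 0 t ∧ x s ≠ ⊤} :=
  ⟨t, fun v hv => hv.1.2⟩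

lemma le_lastVisit {u : ℝ} (h0 : 0 ≤ u) (hut : u ≤ t) (hx : x u ≠ ⊤) :
    u ≤ lastVisit (fun k => k ≠ ⊤) x t :=
  le_csSup (visit_bddAbove x t) ⟨⟨h0, hut⟩, hx⟩

lemma lastVisit_le (hne : ∃ s ∈ Icc 0 t, x s ≠ ⊤) :
    lastVisit (fun k => k ≠ ⊤) x t ≤ t :=
  csSup_le (by obtain ⟨s, hs, h⟩ := hne; exact ⟨s, ⟨hs, h⟩⟩) fun u hu => hu.1.2

lemma lastVisit_nonneg (hne : ∃ s ∈ Icc 0 t, x s ≠ ⊤) :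
    0 ≤ lastVisit (fun k => k ≠ ⊤) x t := by
  obtain ⟨s, hs, h⟩ := hne
  exact hs.1.trans (le_lastVisit hs.1 hs.2 h)

lemma lastVisit_eq_self (h0 : 0 ≤ t) (hx : x t ≠ ⊤) :
    lastVisit (fun k => k ≠ ⊤) x t = t :=
  le_antisymm (lastVisit_le ⟨t, ⟨h0, le_rfl⟩, hx⟩) (le_lastVisit h0 le_rfl hx)

lemma rinf_eq_self (h0 : 0 ≤ t) (hx : x t ≠ ⊤) : Rinf T x t = x t := by
  have hlv := lastVisit_eq_self (x := x) h0 hx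
  simp only [Rinf, srec, hlv]
  rw [if_pos ⟨t, ⟨h0, le_rfl⟩, hx⟩, if_pos hx]

lemma rinf_novisit (h : ¬∃ s ∈ Icc 0 t, x s ≠ ⊤) : Rinf T x t = 0 := by
  simp only [Rinf, srec]
  rw [if_neg h]

lemma lastVisit_pos (hne : ∃ s ∈ Icc 0 t, x s ≠ ⊤)
    (htop : x (lastVisit (fun k => k ≠ ⊤) x t) = ⊤) :
    0 < lastVisit (fun k => k ≠ ⊤) x t := by
  rcases hne with ⟨s, hs, hxs⟩
  by_contra hc
  push_neg at hc
  have hsσ : s ≤ lastVisit (fun k => k ≠ ⊤) x t := le_lastVisit hs.1 hs.2 hxs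
  have hs0 : s = 0 := le_antisymm (hsσ.trans hc) hs.1
  have hσ0 : lastVisit (fun k => k ≠ ⊤) x t = 0 :=
    le_antisymm hc (lastVisit_nonneg ⟨s, hs, hxs⟩)
  rw [hσ0, ← hs0] at htop
  exact hxs htop

lemma lastVisit_approx (hne : ∃ s ∈ Icc 0 t, x s ≠ ⊤)
    (htop : x (lastVisit (fun k => k ≠ ⊤) x t) = ⊤) :
    ∀ δ > 0, ∃ u, lastVisit (fun k => k ≠ ⊤) x t - δ < u ∧
      u < lastVisit (fun k => k ≠ ⊤) x t ∧ 0 ≤ u ∧ u ≤ t ∧ x u ≠ ⊤ := by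
  intro δ hδ
  obtain ⟨u, hu, hlt⟩ := exists_lt_of_lt_csSup
    (by obtain ⟨s, hs, h⟩ := hne; exact ⟨s, ⟨hs, h⟩⟩)
    (by linarith : lastVisit (fun k => k ≠ ⊤) x t - δ < lastVisit (fun k => k ≠ ⊤) x t)
  have hle : u ≤ lastVisit (fun k => k ≠ ⊤) x t := le_lastVisit hu.1.1 hu.1.2 hu.2
  refine ⟨u, hlt, lt_of_le_of_ne hle fun h => hu.2 (h ▸ htop), hu.1.1, hu.1.2, hu.2⟩

lemma after_lastVisit (hne : ∃ s ∈ Icc 0 t, x s ≠ ⊤) :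
    ∀ u, lastVisit (fun k => k ≠ ⊤) x t < u → u ≤ t → x u = ⊤ := by
  intro u h1 h2
  by_contra h
  exact absurd (le_lastVisit ((lastVisit_nonneg hne).trans h1.le) h2 h) (not_le.mpr h1)

lemma rinf_const (h0 : 0 ≤ t) (htt' : t ≤ t')
    (hconst : ∀ u, t < u → u ≤ t' → x u = ⊤) : Rinf T x t' = Rinf T x t := by
  have hset : {s | s ∈ Icc 0 t' ∧ x s ≠ ⊤} = {s | s ∈ Icc 0 t ∧ x s ≠ ⊤} := by
    ext u
    simp only [Set.mem_setOf_eq, Set.mem_Icc]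
    constructor
    · rintro ⟨⟨h1, h2⟩, h3⟩
      refine ⟨⟨h1, ?_⟩, h3⟩
      by_contra hc
      push_neg at hc
      exact h3 (hconst u hc h2)
    · rintro ⟨⟨h1, h2⟩, h3⟩
      exact ⟨⟨h1, h2.trans htt'⟩, h3⟩
  have hlv : lastVisit (fun k => k ≠ ⊤) x t' = lastVisit (fun k => k ≠ ⊤) x t := by
    simp only [lastVisit]
    rw [hset]
  have hex : (∃ s ∈ Icc 0 t', x s ≠ ⊤) ↔ ∃ s ∈ Icc 0 t, x s ≠ ⊤ := by
    constructor
    · rintro ⟨s, hs, h⟩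
      have hm := (Set.ext_iff.mp hset s).mp ⟨hs, h⟩
      exact ⟨s, hm.1, hm.2⟩
    · rintro ⟨s, hs, h⟩
      exact ⟨s, ⟨hs.1, hs.2.trans htt'⟩, h⟩
  simp only [Rinf, srec]
  rw [hlv]
  by_cases h : ∃ s ∈ Icc 0 t, x s ≠ ⊤
  · rw [if_pos (hex.mpr h), if_pos h]
  · rw [if_neg (fun hc => h (hex.mp hc)), if_neg h]

open Classical in
lemma rinf_top_eval (hne : ∃ s ∈ Icc 0 t, x s ≠ ⊤)
    (htop : x (lastVisit (fun k => k ≠ ⊤) x t) = ⊤) :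
    Rinf T x t =
      if h : ∃ L, leftLim T x (lastVisit (fun k => k ≠ ⊤) x t) L then h.choose
      else if h2 : ∃ n : ℕ, softLeftPair T x (lastVisit (fun k => k ≠ ⊤) x t) n then
        ((h2.choose : ℕ) : Sd)
      else 0 := by
  simp only [Rinf, srec]
  rw [if_pos hne, if_neg (not_not_intro htop)]

lemma rinf_top_left {L : Sd} (hne : ∃ s ∈ Icc 0 t, x s ≠ ⊤)
    (htop : x (lastVisit (fun k => k ≠ ⊤) x t) = ⊤)
    (hL : leftLim T x (lastVisit (fun k => k ≠ ⊤) x t) L)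
    (hNB : (lf T (lastVisit (fun k => k ≠ ⊤) x t)).NeBot) : Rinf T x t = L := by
  haveI := hNB
  rw [rinf_top_eval hne htop, dif_pos ⟨L, hL⟩]
  exact tendsto_nhds_unique (Exists.choose_spec (⟨L, hL⟩ : ∃ L, leftLim T x _ L)) hL

lemma softLeftPair_unique {m n : ℕ} {u : ℝ} (h1 : softLeftPair T x u m)
    (h2 : softLeftPair T x u n) : m = n := by
  rw [softLeftPair] at h1 h2
  have hmem : ((m : ℕ) : Sd) ∈ ({((n : ℕ) : Sd), ⊤} : Set Sd) := by
    rw [← h2, h1]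
    exact Set.mem_insert _ _
  rcases hmem with h | h
  · exact_mod_cast h
  · exact absurd h (by simp)

lemma rinf_top_pair {n : ℕ} (hne : ∃ s ∈ Icc 0 t, x s ≠ ⊤)
    (htop : x (lastVisit (fun k => k ≠ ⊤) x t) = ⊤)
    (hp : softLeftPair T x (lastVisit (fun k => k ≠ ⊤) x t) n)
    (hNB : (lf T (lastVisit (fun k => k ≠ ⊤) x t)).NeBot) :
    Rinf T x t = ((n : ℕ) : Sd) := by
  haveI := hNB
  have hnoL : ¬∃ L, leftLim T x (lastVisit (fun k => k ≠ ⊤) x t) L := by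
    rintro ⟨L, hL⟩
    have h1 : MapClusterPt ((n : ℕ) : Sd) (lf T (lastVisit (fun k => k ≠ ⊤) x t)) x :=
      (Set.ext_iff.mp hp _).mpr (Set.mem_insert _ _)
    have h2 : MapClusterPt (⊤ : Sd) (lf T (lastVisit (fun k => k ≠ ⊤) x t)) x :=
      (Set.ext_iff.mp hp _).mpr (Set.mem_insert_iff.mpr (Or.inr rfl))
    have e1 := mapClusterPt_eq_of_tendsto hL h1
    have e2 := mapClusterPt_eq_of_tendsto hL h2
    exact absurd (e1.trans e2.symm) (by simp)
  rw [rinf_top_eval hne htop, dif_neg hnoL, dif_pos ⟨n, hp⟩]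
  have hsp := Exists.choose_spec (⟨n, hp⟩ : ∃ n, softLeftPair T x (lastVisit (fun k => k ≠ ⊤) x t) n)
  rw [softLeftPair_unique hsp hp]

lemma rinf_eq_top_cases (hyt : Rinf T x t = ⊤) :
    (∃ s ∈ Icc 0 t, x s ≠ ⊤) ∧ x (lastVisit (fun k => k ≠ ⊤) x t) = ⊤ ∧
      leftLim T x (lastVisit (fun k => k ≠ ⊤) x t) ⊤ := by
  by_cases hne : ∃ s ∈ Icc 0 t, x s ≠ ⊤
  · by_cases htop : x (lastVisit (fun k => k ≠ ⊤) x t) = ⊤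
    · refine ⟨hne, htop, ?_⟩
      rw [rinf_top_eval hne htop] at hyt
      by_cases h : ∃ L, leftLim T x (lastVisit (fun k => k ≠ ⊤) x t) L
      · rw [dif_pos h] at hyt
        have hcs := h.choose_spec
        rw [hyt] at hcs
        exact hcs
      · rw [dif_neg h] at hyt
        by_cases h2 : ∃ n : ℕ, softLeftPair T x (lastVisit (fun k => k ≠ ⊤) x t) n
        · rw [dif_pos h2] at hyt
          exact absurd hyt (by simp)
        · rw [dif_neg h2] at hyt
          exact absurd hyt (by simp)
    · have heval : Rinf T x t = x (lastVisit (fun k => k ≠ ⊤) x t) := by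
        simp only [Rinf, srec]
        rw [if_pos hne, if_pos htop]
      rw [heval] at hyt
      exact absurd hyt htop
  · rw [rinf_novisit hne] at hyt
    exact absurd hyt (by simp)

end Eval

/-! ### The window-control lemma -/

section Window

variable {T : ℝ} {x : ℝ → Sd}

lemma window (hbb : memBbE T x) {S : Set Sd} (hSc : IsClosed S) (hStop : (⊤ : Sd) ∈ S)
    {a b : ℝ} (hW : ∀ u, a < u → u < b → 0 ≤ u → u ≤ T → x u ∈ S)
    {s : ℝ} (hsb : s < b) (hs0 : 0 ≤ s) (hsT : s ≤ T)
    {u₀ : ℝ} (hu₀a : a < u₀) (hu₀s : u₀ ≤ s) (hu₀0 : 0 ≤ u₀) (hx₀ : x u₀ ≠ ⊤) :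
    Rinf T x s ∈ S := by
  have hne : ∃ v ∈ Icc 0 s, x v ≠ ⊤ := ⟨u₀, ⟨hu₀0, hu₀s⟩, hx₀⟩
  have hσa : a < lastVisit (fun k => k ≠ ⊤) x s :=
    lt_of_lt_of_le hu₀a (le_lastVisit hu₀0 hu₀s hx₀)
  have hσs : lastVisit (fun k => k ≠ ⊤) x s ≤ s := lastVisit_le hne
  have hσ0 : 0 ≤ lastVisit (fun k => k ≠ ⊤) x s := lastVisit_nonneg hne
  have hσT : lastVisit (fun k => k ≠ ⊤) x s ≤ T := hσs.trans hsT
  by_cases htop : x (lastVisit (fun k => k ≠ ⊤) x s) = ⊤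
  · have hσpos : 0 < lastVisit (fun k => k ≠ ⊤) x s := lastVisit_pos hne htop
    haveI hNB : (lf T (lastVisit (fun k => k ≠ ⊤) x s)).NeBot := lf_neBot hσpos hσT
    have hev : ∀ᶠ u in lf T (lastVisit (fun k => k ≠ ⊤) x s), x u ∈ S := by
      refine (eventually_lf (show (0:ℝ) < lastVisit (fun k => k ≠ ⊤) x s - a by linarith)).mono
        fun u hu => ?_
      exact hW u (by linarith [hu.1]) (by linarith [hu.2.1]) hu.2.2.1 hu.2.2.2
    rcases hbb.2 (lastVisit (fun k => k ≠ ⊤) x s) ⟨hσpos, hσT⟩ with ⟨L, hL⟩ | ⟨n, hp⟩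
    · rw [rinf_top_left hne htop hL hNB]
      exact hSc.mem_of_tendsto hL hev
    · rw [rinf_top_pair hne htop hp hNB]
      have hfreq : ∃ᶠ u in lf T (lastVisit (fun k => k ≠ ⊤) x s), x u = ((n : ℕ) : Sd) :=
        mapClusterPt_coe_iff.mp ((Set.ext_iff.mp hp _).mpr (Set.mem_insert _ _))
      obtain ⟨u, hu1, hu2⟩ := (hfreq.and_eventually hev).exists
      rw [← hu1]
      exact hu2
  · have heval : Rinf T x s = x (lastVisit (fun k => k ≠ ⊤) x s) := by
      simp only [Rinf, srec]
      rw [if_pos hne, if_pos htop]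
    rw [heval]
    exact hW _ hσa (lt_of_le_of_lt hσs hsb) hσ0 hσT

/-! ### Part 1 : `R_∞` is the identity on `E` -/

lemma part1 {x : ℝ → Sd} (hx : memE T x) : Set.EqOn (Rinf T x) x (Set.Icc 0 T) := by
  intro t ht
  obtain ⟨ht0, htT⟩ := ht
  by_cases hxt : x t = ⊤
  · have ht0' : 0 < t := by
      rcases ht0.lt_or_eq with h | h
      · exact h
      · exact absurd (h ▸ hxt) hx.2.1
    obtain ⟨hσpos, hσtop, hσL⟩ := hx.2.2 t ⟨ht0', htT⟩ hxt
    have hne : ∃ s ∈ Icc 0 t, x s ≠ ⊤ := ⟨0, ⟨le_rfl, ht0⟩, hx.2.1⟩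
    have hσT : lastVisit (fun k => k ≠ ⊤) x t ≤ T := (lastVisit_le hne).trans htT
    rw [rinf_top_left hne hσtop hσL (lf_neBot hσpos hσT), hxt]
  · exact rinf_eq_self ht0 hxt

end Window

/-! ### Part 2 : `R_∞` maps `𝔼` into `E` -/

section Part2

variable {T : ℝ} {x : ℝ → Sd}

lemma isClosed_insert_Ioi (n N : ℕ) :
    IsClosed (insert ((n : ℕ) : Sd) (Ioi (N : Sd))) := by
  rw [Set.insert_eq]
  exact IsClosed.union isClosed_singleton (isClosed_Ioi_nat N)

lemma part2_rightCont (hbb : memBbE T x) :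
    ∀ t ∈ Set.Icc 0 T, softRightCont T (Rinf T x) t := by
  intro t ht
  obtain ⟨ht0, htT⟩ := ht
  rcases htT.lt_or_eq with htT' | heq
  · haveI hNBr : (rf T t).NeBot := rf_neBot ht0 htT'
    by_cases hE : ∃ s₀, t < s₀ ∧ ∀ u, t < u → u ≤ s₀ → x u = ⊤
    · obtain ⟨s₀, hs₀, hconst⟩ := hE
      have hevc : ∀ᶠ s in rf T t, Rinf T x s = Rinf T x t := by
        refine (eventually_rf (show (0:ℝ) < s₀ - t by linarith)).mono fun s hs => ?_
        exact rinf_const ht0 hs.1.le fun u hu1 hu2 => hconst u hu1 (by linarith [hs.2.1])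
      have htd : Tendsto (Rinf T x) (rf T t) (𝓝 (Rinf T x t)) :=
        Filter.Tendsto.congr' (by filter_upwards [hevc] with s hs using hs.symm)
          tendsto_const_nhds
      rcases eq_or_ne (Rinf T x t) ⊤ with hyt | hyt
      · exact Or.inl (hyt ▸ htd)
      · obtain ⟨n, hn⟩ := WithTop.ne_top_iff_exists.mp hyt
        have hn' : Rinf T x t = ((n : ℕ) : Sd) := by exact_mod_cast hn.symm
        rw [hn'] at htd
        exact Or.inr (Or.inl ⟨n, htd, hn'⟩)
    · push_neg at hE
      rcases hbb.1 t ⟨ht0, le_of_lt htT'⟩ with hR1 | ⟨n, hR2, hxt⟩ | ⟨n, hR3, hxt⟩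
      · left
        show Tendsto (Rinf T x) (rf T t) (𝓝 ⊤)
        rw [ENat.tendsto_nhds_top_iff_natCast_lt]
        intro N
        have hR1' : Tendsto x (rf T t) (𝓝 ⊤) := hR1
        rw [ENat.tendsto_nhds_top_iff_natCast_lt] at hR1'
        obtain ⟨δ, hδ, hwin⟩ := (rf_basis T t).eventually_iff.mp (hR1' N)
        refine (eventually_rf hδ).mono fun s hs => ?_
        obtain ⟨u, hu1, hu2, hu3⟩ := hE s hs.1
        exact window hbb (isClosed_Ioi_nat N) (by simp)
          (fun v h1 h2 h3 h4 => hwin ⟨⟨h1, h2⟩, h3, h4⟩)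
          hs.2.1 (ht0.trans hs.1.le) hs.2.2.2 hu1 hu2 (ht0.trans hu1.le) hu3
      · right; left
        have hyt : Rinf T x t = ((n : ℕ) : Sd) :=
          (rinf_eq_self ht0 (by rw [hxt]; simp)).trans hxt
        refine ⟨n, ?_, hyt⟩
        have hR2' : Tendsto x (rf T t) (𝓝 ((n : ℕ) : Sd)) := hR2
        rw [ENat.nhds_eq_pure (by simp), tendsto_pure] at hR2'
        show Tendsto (Rinf T x) (rf T t) (𝓝 ((n : ℕ) : Sd))
        rw [ENat.nhds_eq_pure (by simp), tendsto_pure]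
        filter_upwards [hR2', eventually_rf one_pos] with u h1 h2
        exact (rinf_eq_self h2.2.2.1 (by rw [h1]; simp)).trans h1
      · have hyt : Rinf T x t = ((n : ℕ) : Sd) :=
          (rinf_eq_self ht0 (by rw [hxt]; simp)).trans hxt
        have hsub : ∀ L, MapClusterPt L (rf T t) x → L = ((n : ℕ) : Sd) ∨ L = ⊤ := by
          intro L hL
          have := (Set.ext_iff.mp hR3 L).mp hL
          simpa [Set.mem_insert_iff] using this
        have hx_ev := eventually_pair hsub
        have hy_ev : ∀ N : ℕ, ∀ᶠ s in rf T t,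
            Rinf T x s = ((n : ℕ) : Sd) ∨ (N : Sd) < Rinf T x s := by
          intro N
          obtain ⟨δ, hδ, hwin⟩ := (rf_basis T t).eventually_iff.mp (hx_ev N)
          have hW : ∀ v, t < v → v < t + δ → 0 ≤ v → v ≤ T →
              x v ∈ insert ((n : ℕ) : Sd) (Ioi (N : Sd)) := by
            intro v h1 h2 h3 h4
            rcases hwin ⟨⟨h1, h2⟩, h3, h4⟩ with h | h
            · exact Set.mem_insert_iff.mpr (Or.inl h)
            · exact Set.mem_insert_iff.mpr (Or.inr h)
          refine (eventually_rf hδ).mono fun s hs => ?_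
          obtain ⟨u, hu1, hu2, hu3⟩ := hE s hs.1
          have hyS := window hbb (isClosed_insert_Ioi n N)
            (Set.mem_insert_iff.mpr (Or.inr (by simp))) hW
            hs.2.1 (ht0.trans hs.1.le) hs.2.2.2 hu1 hu2 (ht0.trans hu1.le) hu3
          simpa [Set.mem_insert_iff, Set.mem_Ioi] using hyS
        rcases trichotomy hy_ev with h | h | h
        · exact Or.inl h
        · exact Or.inr (Or.inl ⟨n, h, hyt⟩)
        · exact Or.inr (Or.inr ⟨n, h, hyt⟩)
  · left
    show Tendsto (Rinf T x) (rf T t) (𝓝 ⊤)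
    rw [heq, rf_bot]
    exact tendsto_bot

lemma part2_leftLim (hbb : memBbE T x) :
    ∀ t ∈ Set.Ioc 0 T, softLeftLim T (Rinf T x) t := by
  intro t ht
  obtain ⟨ht0, htT⟩ := ht
  haveI hNBl : (lf T t).NeBot := lf_neBot ht0 htT
  rcases hbb.2 t ⟨ht0, htT⟩ with ⟨L, hL⟩ | ⟨n, hp⟩
  · rcases eq_or_ne L ⊤ with rfl | hLne
    · by_cases hacc : ∀ δ > 0, ∃ u, t - δ < u ∧ u < t ∧ 0 ≤ u ∧ x u ≠ ⊤
      · left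
        refine ⟨⊤, ?_⟩
        show Tendsto (Rinf T x) (lf T t) (𝓝 ⊤)
        rw [ENat.tendsto_nhds_top_iff_natCast_lt]
        intro N
        have hL' : Tendsto x (lf T t) (𝓝 ⊤) := hL
        rw [ENat.tendsto_nhds_top_iff_natCast_lt] at hL'
        obtain ⟨δ, hδ, hwin⟩ := (lf_basis T t).eventually_iff.mp (hL' N)
        obtain ⟨a, ha1, ha2, ha3, ha4⟩ := hacc δ hδ
        refine (eventually_lf (show (0:ℝ) < t - a by linarith)).mono fun s hs => ?_
        exact window hbb (isClosed_Ioi_nat N) (by simp)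
          (fun v h1 h2 h3 h4 => hwin ⟨⟨h1, h2⟩, h3, h4⟩)
          hs.2.1 hs.2.2.1 hs.2.2.2 ha1 (by linarith [hs.1]) ha3 ha4
      · push_neg at hacc
        obtain ⟨δ, hδ, hc⟩ := hacc
        have hs₀t : max (t - δ/2) (t/2) < t := max_lt (by linarith) (by linarith)
        have hs₀0 : 0 ≤ max (t - δ/2) (t/2) := le_max_of_le_right (by linarith)
        have hs₀δ : t - δ < max (t - δ/2) (t/2) :=
          lt_of_lt_of_le (by linarith) (le_max_left _ _)
        left
        refine ⟨Rinf T x (max (t - δ/2) (t/2)), ?_⟩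
        have hev : ∀ᶠ s in lf T t, Rinf T x s = Rinf T x (max (t - δ/2) (t/2)) := by
          refine (eventually_lf
            (show (0:ℝ) < t - max (t - δ/2) (t/2) by linarith)).mono fun s hs => ?_
          exact rinf_const hs₀0 (by linarith [hs.1]) fun u hu1 hu2 =>
            hc u (by linarith) (by linarith [hs.2.1]) (hs₀0.trans hu1.le)
        exact Filter.Tendsto.congr' (by filter_upwards [hev] with s h using h.symm)
          tendsto_const_nhds
    · obtain ⟨n, rfl⟩ : ∃ n : ℕ, L = ((n : ℕ) : Sd) := by
        obtain ⟨m, hm⟩ := WithTop.ne_top_iff_exists.mp hLne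
        exact ⟨m, hm.symm⟩
      left
      refine ⟨((n : ℕ) : Sd), ?_⟩
      have hL' : Tendsto x (lf T t) (𝓝 ((n : ℕ) : Sd)) := hL
      rw [ENat.nhds_eq_pure (by simp), tendsto_pure] at hL'
      show Tendsto (Rinf T x) (lf T t) (𝓝 ((n : ℕ) : Sd))
      rw [ENat.nhds_eq_pure (by simp), tendsto_pure]
      filter_upwards [hL', eventually_lf one_pos] with u h1 h2
      exact (rinf_eq_self h2.2.2.1 (by rw [h1]; simp)).trans h1
  · have hsub : ∀ L, MapClusterPt L (lf T t) x → L = ((n : ℕ) : Sd) ∨ L = ⊤ := by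
      intro L hL
      have := (Set.ext_iff.mp hp L).mp hL
      simpa [Set.mem_insert_iff] using this
    have hx_ev := eventually_pair hsub
    have hfreqn : ∃ᶠ u in lf T t, x u = ((n : ℕ) : Sd) :=
      mapClusterPt_coe_iff.mp ((Set.ext_iff.mp hp _).mpr (Set.mem_insert _ _))
    have hy_ev : ∀ N : ℕ, ∀ᶠ s in lf T t,
        Rinf T x s = ((n : ℕ) : Sd) ∨ (N : Sd) < Rinf T x s := by
      intro N
      obtain ⟨δ, hδ, hwin⟩ := (lf_basis T t).eventually_iff.mp (hx_ev N)
      obtain ⟨a, hxa, ha⟩ := (hfreqn.and_eventually (eventually_lf hδ)).exists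
      have hW : ∀ v, t - δ < v → v < t → 0 ≤ v → v ≤ T →
          x v ∈ insert ((n : ℕ) : Sd) (Ioi (N : Sd)) := by
        intro v h1 h2 h3 h4
        rcases hwin ⟨⟨h1, h2⟩, h3, h4⟩ with h | h
        · exact Set.mem_insert_iff.mpr (Or.inl h)
        · exact Set.mem_insert_iff.mpr (Or.inr h)
      refine (eventually_lf (show (0:ℝ) < t - a by linarith [ha.2.1])).mono fun s hs => ?_
      have hyS := window hbb (isClosed_insert_Ioi n N)
        (Set.mem_insert_iff.mpr (Or.inr (by simp))) hW
        hs.2.1 hs.2.2.1 hs.2.2.2 ha.1 (by linarith [hs.1]) ha.2.2.1 (by rw [hxa]; simp)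
      simpa [Set.mem_insert_iff, Set.mem_Ioi] using hyS
    rcases trichotomy hy_ev with h | h | h
    · exact Or.inl ⟨⊤, h⟩
    · exact Or.inl ⟨((n : ℕ) : Sd), h⟩
    · exact Or.inr ⟨n, h⟩

lemma part2_top (hbb : memBbE T x) : ∀ t ∈ Set.Ioc 0 T, Rinf T x t = ⊤ →
    0 < sigmaInf (Rinf T x) t ∧ Rinf T x (sigmaInf (Rinf T x) t) = ⊤ ∧
      leftLim T (Rinf T x) (sigmaInf (Rinf T x) t) ⊤ := by
  intro t ht hyt
  obtain ⟨ht0, htT⟩ := ht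
  obtain ⟨hne, hσtop, hσL⟩ := rinf_eq_top_cases hyt
  have hσpos : 0 < lastVisit (fun k => k ≠ ⊤) x t := lastVisit_pos hne hσtop
  have hσt : lastVisit (fun k => k ≠ ⊤) x t ≤ t := lastVisit_le hne
  have hσT : lastVisit (fun k => k ≠ ⊤) x t ≤ T := hσt.trans htT
  have hafter := after_lastVisit hne
  have hyσ : Rinf T x (lastVisit (fun k => k ≠ ⊤) x t) = ⊤ := by
    rw [← rinf_const (T := T) (lastVisit_nonneg hne) hσt hafter]
    exact hyt
  have hyconst : ∀ s, lastVisit (fun k => k ≠ ⊤) x t ≤ s → s ≤ t → Rinf T x s = ⊤ := by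
    intro s h1 h2
    have h3 : Rinf T x s = Rinf T x (lastVisit (fun k => k ≠ ⊤) x t) :=
      rinf_const (T := T) (lastVisit_nonneg hne) h1 fun u hu1 hu2 =>
        hafter u hu1 (hu2.trans h2)
    exact h3.trans hyσ
  have hfreq : ∀ δ > 0, ∃ u, lastVisit (fun k => k ≠ ⊤) x t - δ < u ∧
      u < lastVisit (fun k => k ≠ ⊤) x t ∧ 0 ≤ u ∧ u ≤ t ∧ Rinf T x u ≠ ⊤ ∧ x u ≠ ⊤ := by
    intro δ hδ
    obtain ⟨u, h1, h2, h3, h4, h5⟩ := lastVisit_approx hne hσtop δ hδ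
    exact ⟨u, h1, h2, h3, h4, by rw [rinf_eq_self h3 h5]; exact h5, h5⟩
  have hσy : sigmaInf (Rinf T x) t = lastVisit (fun k => k ≠ ⊤) x t := by
    apply le_antisymm
    · apply csSup_le
      · obtain ⟨u, h1, h2, h3, h4, h5, _⟩ := hfreq _ hσpos
        exact ⟨u, ⟨⟨h3, h4⟩, h5⟩⟩
      · rintro u ⟨⟨hu0, hut⟩, hu⟩
        by_contra hcon
        push_neg at hcon
        exact hu (hyconst u hcon.le hut)
    · by_contra hcon
      push_neg at hcon
      obtain ⟨u, h1, h2, h3, h4, h5, _⟩ := hfreq _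
        (by linarith : (0:ℝ) < lastVisit (fun k => k ≠ ⊤) x t - sigmaInf (Rinf T x) t)
      have hle : u ≤ sigmaInf (Rinf T x) t :=
        le_csSup ⟨t, fun v hv => hv.1.2⟩ ⟨⟨h3, h4⟩, h5⟩
      linarith
  refine ⟨?_, ?_, ?_⟩
  · rw [hσy]; exact hσpos
  · rw [hσy]; exact hyσ
  · rw [hσy]
    show Tendsto (Rinf T x) (lf T (lastVisit (fun k => k ≠ ⊤) x t)) (𝓝 ⊤)
    rw [ENat.tendsto_nhds_top_iff_natCast_lt]
    intro N
    have hσL' : Tendsto x (lf T (lastVisit (fun k => k ≠ ⊤) x t)) (𝓝 ⊤) := hσL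
    rw [ENat.tendsto_nhds_top_iff_natCast_lt] at hσL'
    obtain ⟨δ, hδ, hwin⟩ := (lf_basis T _).eventually_iff.mp (hσL' N)
    obtain ⟨a, h1, h2, h3, h4, _, h6⟩ := hfreq δ hδ
    refine (eventually_lf
      (show (0:ℝ) < lastVisit (fun k => k ≠ ⊤) x t - a by linarith)).mono fun s hs => ?_
    exact window hbb (isClosed_Ioi_nat N) (by simp)
      (fun v hv1 hv2 hv3 hv4 => hwin ⟨⟨hv1, hv2⟩, hv3, hv4⟩)
      hs.2.1 hs.2.2.1 hs.2.2.2 h1 (by linarith [hs.1]) h3 h6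

lemma part2 (hbb : memBbE T x) : memE T (Rinf T x) := by
  refine ⟨⟨part2_rightCont hbb, part2_leftLim hbb⟩, ?_, part2_top hbb⟩
  by_cases h : x 0 = ⊤
  · have hno : ¬∃ s ∈ Icc (0:ℝ) 0, x s ≠ ⊤ := by
      rintro ⟨s, hs, hxs⟩
      have hs0 : s = 0 := le_antisymm hs.2 hs.1
      exact hxs (hs0 ▸ h)
    rw [rinf_novisit hno]
    simp
  · rw [rinf_eq_self le_rfl h]
    exact h

end Part2

end SoftProof

open Soft Filter Topology in
/-- For every `x ∈ E([0,T], S_d)`, `R_∞ x = x`; consequently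
`R_∞ : 𝔼([0,T], S_d) → E([0,T], S_d)` is an idempotent map onto `E([0,T], S_d)`. -/
theorem stmt6 (T : ℝ) (hT : 0 < T) :
    (∀ x : ℝ → Soft.Sd, Soft.memE T x → Set.EqOn (Soft.Rinf T x) x (Set.Icc 0 T)) ∧
    (∀ x : ℝ → Soft.Sd, Soft.memBbE T x → Soft.memE T (Soft.Rinf T x) ∧
      Set.EqOn (Soft.Rinf T (Soft.Rinf T x)) (Soft.Rinf T x) (Set.Icc 0 T)) := by
  constructor
  · intro x hx
    exact SoftProof.part1 hx
  · intro x hbb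
    have hmem := SoftProof.part2 hbb
    exact ⟨hmem, SoftProof.part1 hmem⟩
end
end

section
/- The function d(x,y) = Σ_{m≥1} 2^{−m} d_S(R_m x, R_m y), where d_S is the Skorohod metric on D([0,T], S_m), is a metric on E([0,T], S_d). -/
open Filter Topology Set

noncomputable section
namespace SoftProof
open Soft

/-! ### basics on `sval` and `sdist` -/

lemma sval_nonneg (k : Sd) : 0 ≤ sval k := by
  unfold sval; split <;> positivity

lemma sval_le_one (k : Sd) : sval k ≤ 1 := by
  unfold sval; split
  · norm_num
  · rw [div_le_one (by positivity)]; push_cast; linarith [Nat.cast_nonneg (α := ℝ) (ENat.toNat k)]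

lemma sdist_nonneg' (k j : Sd) : 0 ≤ sdist k j := abs_nonneg _

lemma sdist_le_one (k j : Sd) : sdist k j ≤ 1 := by
  have h1 := sval_nonneg k; have h2 := sval_nonneg j
  have h3 := sval_le_one k; have h4 := sval_le_one j
  rw [sdist, abs_le]; constructor <;> linarith

lemma sdist_comm' (k j : Sd) : sdist k j = sdist j k := abs_sub_comm _ _

lemma sdist_triangle' (k j l : Sd) : sdist k l ≤ sdist k j + sdist j l := abs_sub_le _ _ _

lemma sval_pos_of_ne_top {k : Sd} (hk : k ≠ ⊤) : 0 < sval k := by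
  unfold sval; rw [if_neg hk]; positivity

lemma sval_inj {k j : Sd} (h : sval k = sval j) : k = j := by
  rcases eq_or_ne k ⊤ with hk | hk <;> rcases eq_or_ne j ⊤ with hj | hj
  · rw [hk, hj]
  · exfalso
    have h2 := sval_pos_of_ne_top hj
    rw [← h, hk] at h2; simp [sval] at h2
  · exfalso
    have h2 := sval_pos_of_ne_top hk
    rw [h, hj] at h2; simp [sval] at h2
  · have h' : (1:ℝ)/((k.toNat:ℝ)+1) = 1/((j.toNat:ℝ)+1) := by
      simpa [sval, hk, hj] using h
    have h1 : (0:ℝ) < (k.toNat:ℝ)+1 := by positivity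
    have h2 : (0:ℝ) < (j.toNat:ℝ)+1 := by positivity
    have h3 : k.toNat = j.toNat := by field_simp at h'; exact_mod_cast (by linarith : (k.toNat:ℝ) = j.toNat)
    rw [← ENat.coe_toNat hk, ← ENat.coe_toNat hj, h3]

lemma sdist_eq_zero_iff {k j : Sd} : sdist k j = 0 ↔ k = j := by
  constructor
  · intro h; exact sval_inj (by rwa [sdist, abs_eq_zero, sub_eq_zero] at h)
  · rintro rfl; simp [sdist]

/-- resolution: two states `≤ m` closer than `((m+1)^2)⁻¹` are equal -/
lemma sdist_res {m : ℕ} {k j : Sd} (hk : k ≤ (m : Sd)) (hj : j ≤ (m : Sd))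
    (h : sdist k j < (((m : ℝ) + 1) ^ 2)⁻¹) : k = j := by
  have hkt : k ≠ ⊤ := fun hh => by simp [hh] at hk
  have hjt : j ≠ ⊤ := fun hh => by simp [hh] at hj
  by_contra hne
  have hab : k.toNat ≠ j.toNat := fun hh =>
    hne (by rw [← ENat.coe_toNat hkt, ← ENat.coe_toNat hjt, hh])
  have ham : k.toNat ≤ m := by
    have := ENat.toNat_le_toNat hk (by simp : (m:Sd) ≠ ⊤); simpa using this
  have hbm : j.toNat ≤ m := by
    have := ENat.toNat_le_toNat hj (by simp : (m:Sd) ≠ ⊤); simpa using this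
  have key : (((m : ℝ) + 1) ^ 2)⁻¹ ≤ sdist k j := by
    have hsv : sdist k j = |1 / ((k.toNat : ℝ) + 1) - 1 / ((j.toNat : ℝ) + 1)| := by
      simp [sdist, sval, hkt, hjt]
    rw [hsv]
    have h1 : (0:ℝ) < (k.toNat : ℝ) + 1 := by positivity
    have h2 : (0:ℝ) < (j.toNat : ℝ) + 1 := by positivity
    have heq : 1 / ((k.toNat : ℝ) + 1) - 1 / ((j.toNat : ℝ) + 1)
        = ((j.toNat : ℝ) - (k.toNat : ℝ)) / (((k.toNat:ℝ)+1) * ((j.toNat:ℝ)+1)) := by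
      field_simp; ring
    rw [heq, abs_div, abs_of_pos (show (0:ℝ) < ((k.toNat:ℝ)+1) * ((j.toNat:ℝ)+1) by positivity)]
    have hnum : (1:ℝ) ≤ |(j.toNat : ℝ) - (k.toNat : ℝ)| := by
      rcases Nat.lt_or_ge k.toNat j.toNat with hlt | hge
      · have h5 : (k.toNat:ℝ) + 1 ≤ (j.toNat:ℝ) := by exact_mod_cast Nat.succ_le_of_lt hlt
        rw [abs_of_pos (by linarith)]; linarith
      · have hlt : j.toNat < k.toNat := lt_of_le_of_ne hge (Ne.symm hab)
        have h5 : (j.toNat:ℝ) + 1 ≤ (k.toNat:ℝ) := by exact_mod_cast Nat.succ_le_of_lt hlt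
        rw [abs_of_neg (by linarith)]; linarith
    have hden : ((k.toNat:ℝ)+1) * ((j.toNat:ℝ)+1) ≤ ((m : ℝ) + 1) ^ 2 := by
      have h3 : (k.toNat : ℝ) ≤ m := by exact_mod_cast ham
      have h4 : (j.toNat : ℝ) ≤ m := by exact_mod_cast hbm
      nlinarith
    calc (((m : ℝ) + 1) ^ 2)⁻¹ = 1 / (((m:ℝ)+1)^2) := by rw [inv_eq_one_div]
      _ ≤ 1 / (((k.toNat:ℝ)+1) * ((j.toNat:ℝ)+1)) :=
          one_div_le_one_div_of_le (by positivity) hden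
      _ ≤ |(j.toNat:ℝ) - (k.toNat:ℝ)| / (((k.toNat:ℝ)+1) * ((j.toNat:ℝ)+1)) :=
          (div_le_div_iff_of_pos_right (by positivity)).mpr hnum
  linarith

/-! ### the defining set of the Skorohod distance -/

def TSet (T : ℝ) (x y : ℝ → Sd) : Set ℝ :=
  {a : ℝ | ∃ l, TimeChange T l ∧
    (∀ t ∈ Set.Icc 0 T, sdist (x t) (y (l t)) ≤ a) ∧
    ∀ s ∈ Set.Icc 0 T, ∀ t ∈ Set.Icc 0 T, s < t → |Real.log ((l t - l s) / (t - s))| ≤ a}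

lemma dS_eq (T : ℝ) (x y : ℝ → Sd) : dS T x y = sInf (TSet T x y) := rfl

lemma tc_id (T : ℝ) : TimeChange T id :=
  ⟨rfl, rfl, continuousOn_id, fun _ _ _ _ h => h, fun _ h => h⟩

lemma mem_TSet_of_one_le {T : ℝ} {x y : ℝ → Sd} {a : ℝ} (ha : 1 ≤ a) : a ∈ TSet T x y := by
  refine ⟨id, tc_id T, fun t _ => (sdist_le_one _ _).trans ha, fun s _ t _ hst => ?_⟩
  simp only [id]
  rw [div_self (by linarith : t - s ≠ 0), Real.log_one, abs_zero]; linarith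

lemma TSet_nonempty (T : ℝ) (x y : ℝ → Sd) : (TSet T x y).Nonempty :=
  ⟨1, mem_TSet_of_one_le le_rfl⟩

lemma nonneg_of_mem_TSet {T : ℝ} (hT : 0 < T) {x y : ℝ → Sd} {a : ℝ}
    (ha : a ∈ TSet T x y) : 0 ≤ a := by
  obtain ⟨l, _, hd, _⟩ := ha
  exact le_trans (sdist_nonneg' _ _) (hd T ⟨hT.le, le_rfl⟩)

lemma bddBelow_TSet {T : ℝ} (hT : 0 < T) (x y : ℝ → Sd) : BddBelow (TSet T x y) :=
  ⟨0, fun _ ha => nonneg_of_mem_TSet hT ha⟩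

lemma dS_nonneg {T : ℝ} (hT : 0 < T) (x y : ℝ → Sd) : 0 ≤ dS T x y :=
  le_csInf (TSet_nonempty T x y) (fun _ ha => nonneg_of_mem_TSet hT ha)

lemma dS_le_one {T : ℝ} (hT : 0 < T) (x y : ℝ → Sd) : dS T x y ≤ 1 :=
  csInf_le (bddBelow_TSet hT x y) (mem_TSet_of_one_le le_rfl)

lemma dS_zero_of_eqOn {T : ℝ} (hT : 0 < T) {x y : ℝ → Sd}
    (h : Set.EqOn x y (Set.Icc 0 T)) : dS T x y = 0 := by
  refine le_antisymm (csInf_le (bddBelow_TSet hT x y) ?_) (dS_nonneg hT x y)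
  refine ⟨id, tc_id T, fun t ht => ?_, fun s _ t _ hst => ?_⟩
  · simp only [id]; rw [← h ht, sdist, sub_self, abs_zero]
  · simp only [id]
    rw [div_self (by linarith : t - s ≠ 0), Real.log_one, abs_zero]

/-! ### symmetry -/

lemma tc_surjOn {T : ℝ} {l : ℝ → ℝ} (hT : 0 < T) (hl : TimeChange T l) :
    Set.SurjOn l (Set.Icc 0 T) (Set.Icc 0 T) := by
  obtain ⟨h0, hT', hc, hm, hM⟩ := hl
  have key := intermediate_value_Icc hT.le hc
  rw [h0, hT'] at key
  exact key

lemma tc_inv {T : ℝ} {l : ℝ → ℝ} (hT : 0 < T) (hl : TimeChange T l) :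
    ∃ g, TimeChange T g ∧ (∀ u ∈ Set.Icc 0 T, l (g u) = u) ∧
      ∀ u ∈ Set.Icc 0 T, g (l u) = u := by
  have hsurj := tc_surjOn hT hl
  obtain ⟨h0, hT', hc, hm, hM⟩ := hl
  set g := Function.invFunOn l (Set.Icc 0 T) with hgdef
  have hrl : ∀ u ∈ Set.Icc 0 T, l (g u) = u := fun u hu => hsurj.rightInvOn_invFunOn hu
  have hmem : ∀ u ∈ Set.Icc 0 T, g u ∈ Set.Icc 0 T := fun u hu =>
    Function.invFunOn_mem ((Set.mem_image _ _ _).mp (hsurj hu))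
  have hlr : ∀ u ∈ Set.Icc 0 T, g (l u) = u := fun u hu => hm.injOn.leftInvOn_invFunOn hu
  have hIcc0 : (0:ℝ) ∈ Set.Icc 0 T := ⟨le_rfl, hT.le⟩
  have hIccT : T ∈ Set.Icc 0 T := ⟨hT.le, le_rfl⟩
  have hg0 : g 0 = 0 := by conv_lhs => rw [← h0]
                           exact hlr 0 hIcc0
  have hgT : g T = T := by conv_lhs => rw [← hT']
                           exact hlr T hIccT
  have hgm : StrictMonoOn g (Set.Icc 0 T) := by
    intro u hu v hv huv
    rcases lt_or_ge (g u) (g v) with h | h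
    · exact h
    · exfalso
      have h2 : l (g v) ≤ l (g u) :=
        hm.monotoneOn (hmem v hv) (hmem u hu) h
      rw [hrl u hu, hrl v hv] at h2
      linarith
  have hgc : ContinuousOn g (Set.Icc 0 T) := by
    intro p hp
    have hleft : ContinuousWithinAt g (Set.Icc 0 T ∩ Set.Iic p) p := by
      rcases eq_or_lt_of_le hp.1 with h0p | h0p
      · have hset : Set.Icc 0 T ∩ Set.Iic p = {p} := by
          ext u
          simp only [Set.mem_inter_iff, Set.mem_Icc, Set.mem_Iic, Set.mem_singleton_iff]
          constructor
          · rintro ⟨⟨hu1, _⟩, hu2⟩; rw [← h0p] at hu2 ⊢; linarith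
          · rintro rfl; exact ⟨⟨hp.1, hp.2⟩, le_rfl⟩
        rw [hset]; exact continuousWithinAt_singleton
      · have hgp : 0 < g p := by
          have := hgm hIcc0 hp h0p
          rwa [hg0] at this
        have hnhd : Set.Icc 0 T ∈ 𝓝[≤] p := by
          apply mem_nhdsWithin.mpr
          exact ⟨Set.Ioo 0 (T+1), isOpen_Ioo, ⟨h0p, by linarith [hp.2]⟩,
            fun u hu => ⟨hu.1.1.le, hu.2.trans hp.2⟩⟩
        have hbet : ∀ b < g p, ∃ c ∈ Set.Icc 0 T, g c ∈ Set.Ico b (g p) := by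
          intro b hb
          have hw : max b 0 < g p := max_lt hb hgp
          have hwmem : max b 0 ∈ Set.Icc 0 T :=
            ⟨le_max_right _ _, hw.le.trans (hmem p hp).2⟩
          exact ⟨l (max b 0), hM hwmem, by rw [hlr _ hwmem]; exact ⟨le_max_left _ _, hw⟩⟩
        exact (hgm.continuousWithinAt_left_of_exists_between hnhd hbet).mono
          Set.inter_subset_right
    have hright : ContinuousWithinAt g (Set.Icc 0 T ∩ Set.Ici p) p := by
      rcases eq_or_lt_of_le hp.2 with hpT | hpT
      · have hset : Set.Icc 0 T ∩ Set.Ici p = {p} := by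
          ext u
          simp only [Set.mem_inter_iff, Set.mem_Icc, Set.mem_Ici, Set.mem_singleton_iff]
          constructor
          · rintro ⟨⟨_, hu1⟩, hu2⟩; rw [hpT] at hu2 ⊢ <;> linarith
          · rintro rfl; exact ⟨⟨hp.1, hp.2⟩, le_rfl⟩
        rw [hset]; exact continuousWithinAt_singleton
      · have hgp : g p < T := by
          have := hgm hp hIccT hpT
          rwa [hgT] at this
        have hnhd : Set.Icc 0 T ∈ 𝓝[≥] p := by
          apply mem_nhdsWithin.mpr
          exact ⟨Set.Ioo (-1) T, isOpen_Ioo, ⟨by linarith [hp.1], hpT⟩,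
            fun u hu => ⟨hp.1.trans hu.2, hu.1.2.le⟩⟩
        have hbet : ∀ b > g p, ∃ c ∈ Set.Icc 0 T, g c ∈ Set.Ioc (g p) b := by
          intro b hb
          have hw : g p < min b T := lt_min hb hgp
          have hwmem : min b T ∈ Set.Icc 0 T :=
            ⟨le_trans (hmem p hp).1 hw.le, min_le_right _ _⟩
          exact ⟨l (min b T), hM hwmem, by rw [hlr _ hwmem]; exact ⟨hw, min_le_left _ _⟩⟩
        exact (hgm.continuousWithinAt_right_of_exists_between hnhd hbet).mono
          Set.inter_subset_right
    have hcomb := hleft.union hright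
    rw [← Set.inter_union_distrib_left, Set.Iic_union_Ici, Set.inter_univ] at hcomb
    exact hcomb
  exact ⟨g, ⟨hg0, hgT, hgc, hgm, fun u hu => hmem u hu⟩, hrl, hlr⟩

lemma TSet_symm {T : ℝ} (hT : 0 < T) {x y : ℝ → Sd} {a : ℝ}
    (ha : a ∈ TSet T x y) : a ∈ TSet T y x := by
  obtain ⟨l, hl, hd, hg⟩ := ha
  obtain ⟨g, hgtc, hrl, hlr⟩ := tc_inv hT hl
  have hgM := hgtc.2.2.2.2
  refine ⟨g, hgtc, fun t ht => ?_, fun s hs t ht hst => ?_⟩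
  · rw [sdist_comm']
    have := hd (g t) (hgM ht)
    rwa [hrl t ht] at this
  · have hgs : g s ∈ Set.Icc 0 T := hgM hs
    have hgt : g t ∈ Set.Icc 0 T := hgM ht
    have huv : g s < g t := by
      rcases lt_or_ge (g s) (g t) with h | h
      · exact h
      · exfalso
        have h2 : l (g t) ≤ l (g s) := (hl.2.2.2.1).monotoneOn hgt hgs h
        rw [hrl s hs, hrl t ht] at h2
        linarith
    have key := hg (g s) hgs (g t) hgt huv
    rw [hrl s hs, hrl t ht] at key
    have heq : (g t - g s) / (t - s) = ((t - s) / (g t - g s))⁻¹ := by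
      rw [inv_div]
    rw [heq, Real.log_inv, abs_neg]
    exact key

lemma dS_comm {T : ℝ} (hT : 0 < T) (x y : ℝ → Sd) : dS T x y = dS T y x := by
  apply le_antisymm <;>
  · apply le_csInf (TSet_nonempty _ _ _)
    intro a ha
    exact csInf_le (bddBelow_TSet hT _ _) (TSet_symm hT ha)

/-! ### triangle inequality -/

lemma TSet_add {T : ℝ} (hT : 0 < T) {x y z : ℝ → Sd} {a b : ℝ}
    (ha : a ∈ TSet T x y) (hb : b ∈ TSet T y z) : a + b ∈ TSet T x z := by
  obtain ⟨l1, ⟨hl10, hl1T, hl1c, hl1m, hl1M⟩, hd1, hg1⟩ := ha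
  obtain ⟨l2, ⟨hl20, hl2T, hl2c, hl2m, hl2M⟩, hd2, hg2⟩ := hb
  refine ⟨l2 ∘ l1, ⟨by simp [hl10, hl20], by simp [hl1T, hl2T],
    hl2c.comp hl1c hl1M, hl2m.comp hl1m hl1M, hl2M.comp hl1M⟩, ?_, ?_⟩
  · intro t ht
    calc sdist (x t) (z (l2 (l1 t))) ≤ sdist (x t) (y (l1 t)) + sdist (y (l1 t)) (z (l2 (l1 t))) :=
          sdist_triangle' _ _ _
      _ ≤ a + b := add_le_add (hd1 t ht) (hd2 (l1 t) (hl1M ht))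
  · intro s hs t ht hst
    have h1 : l1 s < l1 t := hl1m hs ht hst
    have h1' : l1 t - l1 s ≠ 0 := by linarith
    have key : (l2 (l1 t) - l2 (l1 s)) / (t - s)
        = ((l2 (l1 t) - l2 (l1 s)) / (l1 t - l1 s)) * ((l1 t - l1 s) / (t - s)) := by
      rw [div_mul_div_comm, mul_comm (l2 (l1 t) - l2 (l1 s)) (l1 t - l1 s),
        mul_div_mul_left _ _ h1']
    simp only [Function.comp]
    rw [key, Real.log_mul]
    · calc |Real.log ((l2 (l1 t) - l2 (l1 s)) / (l1 t - l1 s)) +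
            Real.log ((l1 t - l1 s) / (t - s))|
          ≤ |Real.log ((l2 (l1 t) - l2 (l1 s)) / (l1 t - l1 s))| +
            |Real.log ((l1 t - l1 s) / (t - s))| := abs_add_le _ _
        _ ≤ a + b := by
            rw [add_comm a b]
            exact add_le_add (hg2 (l1 s) (hl1M hs) (l1 t) (hl1M ht) h1) (hg1 s hs t ht hst)
    · have h2' : l2 (l1 s) < l2 (l1 t) := hl2m (hl1M hs) (hl1M ht) h1
      exact div_ne_zero (sub_ne_zero_of_ne (ne_of_gt h2')) (sub_ne_zero_of_ne (ne_of_gt h1))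
    · exact div_ne_zero (sub_ne_zero_of_ne (ne_of_gt h1)) (sub_ne_zero_of_ne (ne_of_gt hst))

lemma dS_triangle {T : ℝ} (hT : 0 < T) (x y z : ℝ → Sd) :
    dS T x z ≤ dS T x y + dS T y z := by
  have h1 : ∀ b ∈ TSet T y z, dS T x z ≤ dS T x y + b := by
    intro b hb
    have key : ∀ a ∈ TSet T x y, dS T x z - b ≤ a := by
      intro a ha
      have := csInf_le (bddBelow_TSet hT x z) (TSet_add hT ha hb)
      rw [← dS_eq] at this; linarith
    have := le_csInf (TSet_nonempty T x y) key
    rw [← dS_eq] at this; linarith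
  have key2 : ∀ b ∈ TSet T y z, dS T x z - dS T x y ≤ b := fun b hb => by linarith [h1 b hb]
  have := le_csInf (TSet_nonempty T y z) key2
  rw [← dS_eq] at this; linarith

/-! ### filter helpers on `ℕ∞` -/

lemma eventually_eq_of_tendsto_coe {F : Filter ℝ} {y : ℝ → Sd} {n : ℕ}
    (h : Filter.Tendsto y F (𝓝 (n : Sd))) : ∀ᶠ s in F, y s = (n : Sd) := by
  have : {(n : Sd)} ∈ 𝓝 (n : Sd) := by
    rw [ENat.nhds_eq_pure (by simp : (n:Sd) ≠ ⊤)]; rfl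
  exact h this

lemma eventually_lt_of_tendsto_top {F : Filter ℝ} {y : ℝ → Sd} {m : ℕ}
    (h : Filter.Tendsto y F (𝓝 (⊤ : Sd))) : ∀ᶠ s in F, (m : Sd) < y s := by
  exact ENat.tendsto_nhds_top_iff_natCast_lt.mp h m

lemma mapClusterPt_of_frequently_eq {F : Filter ℝ} {y : ℝ → Sd} {k : Sd}
    (h : ∃ᶠ s in F, y s = k) : MapClusterPt k F y := by
  rw [mapClusterPt_iff_frequently]
  intro s hs
  exact h.mono (fun a ha => ha ▸ mem_of_mem_nhds hs)

lemma eventually_ne_of_not_mapClusterPt {F : Filter ℝ} {y : ℝ → Sd} {k : Sd} (hk : k ≠ ⊤)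
    (h : ¬ MapClusterPt k F y) : ∀ᶠ s in F, y s ≠ k := by
  by_contra hc
  exact h (mapClusterPt_of_frequently_eq ((Filter.not_eventually.mp hc).mono
    (fun a ha => not_not.mp ha)))

/-- pigeonhole: if `y` is frequently `≤ m` then some single value `k ≤ m` is frequent -/
lemma freq_finite {F : Filter ℝ} {y : ℝ → Sd} {m : ℕ}
    (hfreq : ∃ᶠ s in F, y s ≤ (m : Sd)) :
    ∃ k : ℕ, k ≤ m ∧ ∃ᶠ s in F, y s = (k : Sd) := by
  by_contra h
  push_neg at h
  have hev : ∀ k ∈ Finset.range (m+1), ∀ᶠ s in F, y s ≠ (k : Sd) := by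
    intro k hk
    have hkm : k ≤ m := by have := Finset.mem_range.mp hk; omega
    have := h k hkm
    exact this.mono (fun a ha => by simpa using ha)
  have hall : ∀ᶠ s in F, ∀ k ∈ Finset.range (m+1), y s ≠ (k : Sd) :=
    (Filter.eventually_all_finset (Finset.range (m+1))).mpr hev
  obtain ⟨s, hs1, hs2⟩ := (hfreq.and_eventually hall).exists
  have hne : y s ≠ ⊤ := fun hc => by simp [hc] at hs1
  have htn : (y s).toNat ≤ m := by
    have := ENat.toNat_le_toNat hs1 (by simp : (m:Sd) ≠ ⊤)
    simpa using this
  exact hs2 (y s).toNat (by simp [Nat.lt_succ_iff, htn]) (ENat.coe_toNat hne).symm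

/-! ### `lastVisit` facts -/

lemma lastVisit_mem_Icc {P : Sd → Prop} {x : ℝ → Sd} {t : ℝ}
    (hex : ∃ s ∈ Set.Icc 0 t, P (x s)) : lastVisit P x t ∈ Set.Icc 0 t := by
  obtain ⟨s₀, hs₀, hPs₀⟩ := hex
  have hbdd : BddAbove {s | s ∈ Set.Icc 0 t ∧ P (x s)} := ⟨t, fun s hs => hs.1.2⟩
  constructor
  · exact hs₀.1.trans (le_csSup hbdd ⟨hs₀, hPs₀⟩)
  · exact csSup_le ⟨s₀, hs₀, hPs₀⟩ (fun s hs => hs.1.2)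

lemma le_lastVisit_s9 {P : Sd → Prop} {x : ℝ → Sd} {t s : ℝ}
    (hs : s ∈ Set.Icc 0 t) (hPs : P (x s)) : s ≤ lastVisit P x t :=
  le_csSup ⟨t, fun u hu => hu.1.2⟩ ⟨hs, hPs⟩

/-- visits accumulate at the last-visit time from the left when it is not itself a visit -/
lemma freq_visits {T : ℝ} {P : Sd → Prop} {x : ℝ → Sd} {t : ℝ} (htT : t ≤ T)
    (hex : ∃ s ∈ Set.Icc 0 t, P (x s)) (hnP : ¬ P (x (lastVisit P x t))) :
    ∃ᶠ s in lf T (lastVisit P x t), P (x s) ∧ s ∈ Set.Icc 0 t := by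
  set τ := lastVisit P x t with hτ
  rw [Filter.frequently_iff]
  intro V hV
  rw [lf, mem_nhdsWithin] at hV
  obtain ⟨U, hUopen, hτU, hUsub⟩ := hV
  obtain ⟨δ, hδpos, hball⟩ := Metric.isOpen_iff.mp hUopen τ hτU
  obtain ⟨s₀, hs₀A, hs₀gt⟩ := exists_lt_of_lt_csSup
    (by obtain ⟨s, hs, hP⟩ := hex; exact ⟨s, hs, hP⟩)
    (by linarith : τ - δ < τ)
  have hs₀le : s₀ ≤ τ := le_lastVisit_s9 hs₀A.1 hs₀A.2
  have hs₀ne : s₀ ≠ τ := fun hc => hnP (hc ▸ hs₀A.2)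
  have hs₀lt : s₀ < τ := lt_of_le_of_ne hs₀le hs₀ne
  refine ⟨s₀, hUsub ⟨hball ?_, ⟨hs₀A.1.1, hs₀A.1.2.trans htT⟩, hs₀lt⟩, hs₀A.2, hs₀A.1⟩
  rw [Metric.mem_ball, Real.dist_eq, abs_of_nonpos (by linarith)]
  linarith

lemma choose_congr {α : Sort*} {p q : α → Prop} (h : p = q) (hp : ∃ a, p a) (hq : ∃ a, q a) :
    hp.choose = hq.choose := by subst h; rfl

/-! ### basic facts about the record operator -/

lemma srec_eq_self {T : ℝ} {P : Sd → Prop} {x : ℝ → Sd} {t : ℝ}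
    (ht : 0 ≤ t) (hP : P (x t)) : srec T P x t = x t := by
  have hex : ∃ s ∈ Set.Icc 0 t, P (x s) := ⟨t, ⟨ht, le_rfl⟩, hP⟩
  have hlv : lastVisit P x t = t := by
    apply le_antisymm
    · exact csSup_le ⟨t, ⟨ht, le_rfl⟩, hP⟩ (fun s hs => hs.1.2)
    · exact le_csSup ⟨t, fun s hs => hs.1.2⟩ ⟨⟨ht, le_rfl⟩, hP⟩
  rw [srec, if_pos hex, hlv, if_pos hP]

lemma Rm_eq_self {T : ℝ} {m : ℕ} {x : ℝ → Sd} {t : ℝ}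
    (ht : 0 ≤ t) (hx : x t ≤ (m : Sd)) : Rm T m x t = x t :=
  srec_eq_self ht hx

/-- the record operator only depends on the restriction of the trajectory to `[0,T]` -/
lemma srec_congr {T : ℝ} {P : Sd → Prop} {x y : ℝ → Sd} {t : ℝ}
    (ht : t ∈ Set.Icc 0 T) (hxy : Set.EqOn x y (Set.Icc 0 T)) :
    srec T P x t = srec T P y t := by
  have hsub : Set.Icc 0 t ⊆ Set.Icc 0 T := fun s hs => ⟨hs.1, hs.2.trans ht.2⟩
  have hsets : {s | s ∈ Set.Icc 0 t ∧ P (x s)} = {s | s ∈ Set.Icc 0 t ∧ P (y s)} := by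
    ext s
    simp only [Set.mem_setOf_eq]
    constructor
    · rintro ⟨hs, hP⟩; exact ⟨hs, by rwa [hxy (hsub hs)] at hP⟩
    · rintro ⟨hs, hP⟩; exact ⟨hs, by rwa [← hxy (hsub hs)] at hP⟩
  have hlv : lastVisit P x t = lastVisit P y t := by
    unfold lastVisit; rw [hsets]
  have hexiff : (∃ s ∈ Set.Icc 0 t, P (x s)) ↔ (∃ s ∈ Set.Icc 0 t, P (y s)) := by
    constructor
    · rintro ⟨s, hs, hP⟩; exact ⟨s, hs, by rwa [hxy (hsub hs)] at hP⟩
    · rintro ⟨s, hs, hP⟩; exact ⟨s, hs, by rwa [← hxy (hsub hs)] at hP⟩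
  by_cases hex : ∃ s ∈ Set.Icc 0 t, P (x s)
  · have hexy : ∃ s ∈ Set.Icc 0 t, P (y s) := hexiff.mp hex
    have hτmem : lastVisit P x t ∈ Set.Icc 0 T := hsub (lastVisit_mem_Icc hex)
    have hval : x (lastVisit P x t) = y (lastVisit P y t) := by
      rw [← hlv]; exact hxy hτmem
    -- the left-limit filter congruence
    have hevs : ∀ᶠ s in lf T (lastVisit P x t), x s = y s := by
      have : Set.Icc 0 T ∩ Set.Iio (lastVisit P x t) ∈ lf T (lastVisit P x t) :=
        self_mem_nhdsWithin
      exact Filter.mem_of_superset this (fun s hs => hxy hs.1)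
    have hmap : Filter.map x (lf T (lastVisit P x t)) = Filter.map y (lf T (lastVisit P x t)) :=
      Filter.map_congr hevs
    have hllim : ∀ L, leftLim T x (lastVisit P x t) L ↔ leftLim T y (lastVisit P y t) L := by
      intro L
      rw [← hlv]
      unfold leftLim Filter.Tendsto
      rw [hmap]
    have hpair : ∀ n : ℕ, softLeftPair T x (lastVisit P x t) n ↔
        softLeftPair T y (lastVisit P y t) n := by
      intro n
      rw [← hlv]
      unfold softLeftPair MapClusterPt
      rw [hmap]
    have hfunL : leftLim T x (lastVisit P x t) = leftLim T y (lastVisit P x t) :=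
      funext fun L => propext (by unfold leftLim Filter.Tendsto; rw [hmap])
    have hfunP : softLeftPair T x (lastVisit P x t) = softLeftPair T y (lastVisit P x t) :=
      funext fun n => propext (by unfold softLeftPair MapClusterPt; rw [hmap])
    have hval' : x (lastVisit P x t) = y (lastVisit P x t) := hxy hτmem
    rw [srec, srec, if_pos hex, if_pos hexy, ← hlv]
    by_cases hP : P (x (lastVisit P x t))
    · have hPy : P (y (lastVisit P x t)) := hval' ▸ hP
      rw [if_pos hP, if_pos hPy, hval']
    · have hPy : ¬ P (y (lastVisit P x t)) := fun hc => hP (by rwa [← hval'] at hc)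
      rw [if_neg hP, if_neg hPy]
      by_cases hL : ∃ L, leftLim T x (lastVisit P x t) L
      · have hLy : ∃ L, leftLim T y (lastVisit P x t) L := hfunL ▸ hL
        rw [dif_pos hL, dif_pos hLy]
        exact choose_congr hfunL hL hLy
      · have hLy : ¬ ∃ L, leftLim T y (lastVisit P x t) L := fun hc => hL (hfunL.symm ▸ hc)
        rw [dif_neg hL, dif_neg hLy]
        by_cases hp2 : ∃ n : ℕ, softLeftPair T x (lastVisit P x t) n
        · have hp2y : ∃ n : ℕ, softLeftPair T y (lastVisit P x t) n := hfunP ▸ hp2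
          rw [dif_pos hp2, dif_pos hp2y]
          exact congrArg _ (choose_congr hfunP hp2 hp2y)
        · have hp2y : ¬ ∃ n : ℕ, softLeftPair T y (lastVisit P x t) n :=
            fun hc => hp2 (hfunP.symm ▸ hc)
          rw [dif_neg hp2, dif_neg hp2y]
  · have hexy : ¬ ∃ s ∈ Set.Icc 0 t, P (y s) := fun hc => hex (hexiff.mpr hc)
    rw [srec, srec, if_neg hex, if_neg hexy]

/-! ### no new visits ⇒ record constant -/

lemma srec_eq_of_no_visits {T : ℝ} {P : Sd → Prop} {x : ℝ → Sd} {t s : ℝ}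
    (ht0 : 0 ≤ t) (hts : t ≤ s) (hno : ∀ u, t < u → u ≤ s → ¬ P (x u)) :
    srec T P x s = srec T P x t := by
  have hsets : {u | u ∈ Set.Icc 0 s ∧ P (x u)} = {u | u ∈ Set.Icc 0 t ∧ P (x u)} := by
    ext u
    simp only [Set.mem_setOf_eq, Set.mem_Icc]
    constructor
    · rintro ⟨⟨h0, h1⟩, h2⟩
      refine ⟨⟨h0, ?_⟩, h2⟩
      by_contra hgt
      push_neg at hgt
      exact hno u hgt h1 h2
    · rintro ⟨⟨h0, h1⟩, h2⟩
      exact ⟨⟨h0, h1.trans hts⟩, h2⟩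
  have hlv : lastVisit P x s = lastVisit P x t := by
    unfold lastVisit; rw [hsets]
  have hex : (∃ u ∈ Set.Icc 0 s, P (x u)) ↔ (∃ u ∈ Set.Icc 0 t, P (x u)) := by
    constructor <;> rintro ⟨u, hu, hP⟩
    · have := (Set.ext_iff.mp hsets u).mp ⟨hu, hP⟩
      exact ⟨u, this.1, this.2⟩
    · have := (Set.ext_iff.mp hsets u).mpr ⟨hu, hP⟩
      exact ⟨u, this.1, this.2⟩
  by_cases h : ∃ u ∈ Set.Icc 0 t, P (x u)
  · have h' : ∃ u ∈ Set.Icc 0 s, P (x u) := hex.mpr h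
    rw [srec, srec, hlv, if_pos h', if_pos h]
  · have h' : ¬ ∃ u ∈ Set.Icc 0 s, P (x u) := fun hc => h (hex.mp hc)
    rw [srec, srec, if_neg h', if_neg h]

/-! ### extracting an interval from an eventual property on the right filter -/

lemma eventually_interval {T t : ℝ} {Q : ℝ → Prop} (h : ∀ᶠ s in rf T t, Q s) :
    ∃ δ > 0, ∀ u, t < u → u < t + δ → u ∈ Set.Icc 0 T → Q u := by
  unfold rf at h
  rw [Filter.eventually_iff, mem_nhdsWithin] at h
  obtain ⟨U, hUopen, htU, hsub⟩ := h
  obtain ⟨δ, hδpos, hball⟩ := Metric.isOpen_iff.mp hUopen t htU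
  refine ⟨δ, hδpos, fun u h1 h2 h3 => hsub ⟨hball ?_, h3, h1⟩⟩
  rw [Metric.mem_ball, Real.dist_eq, abs_of_pos (by linarith)]
  linarith

lemma rf_eventually_mem {T t δ : ℝ} (hδ : 0 < δ) :
    ∀ᶠ s in rf T t, s ∈ Set.Icc 0 T ∧ t < s ∧ s < t + δ := by
  have h1 : ∀ᶠ s in rf T t, s ∈ Set.Icc 0 T ∩ Set.Ioi t := eventually_mem_nhdsWithin
  have h2 : ∀ᶠ s in rf T t, s < t + δ := by
    have : Set.Iio (t + δ) ∈ 𝓝 t := Iio_mem_nhds (by linarith)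
    exact mem_nhdsWithin_of_mem_nhds this
  exact (h1.and h2).mono (fun s hs => ⟨hs.1.1, hs.1.2, hs.2⟩)

/-! ### the record value stays in `S_m` -/

lemma Rm_le {T : ℝ} {m : ℕ} {x : ℝ → Sd} {t : ℝ} (ht : t ∈ Set.Icc 0 T) :
    Rm T m x t ≤ (m : Sd) := by
  rw [Rm, srec]
  by_cases hex : ∃ s ∈ Set.Icc 0 t, x s ≤ (m : Sd)
  · rw [if_pos hex]
    by_cases hP : x (lastVisit (fun k => k ≤ (m:Sd)) x t) ≤ (m:Sd)
    · rw [if_pos hP]; exact hP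
    · rw [if_neg hP]
      have hfreq : ∃ᶠ s in lf T (lastVisit (fun k => k ≤ (m:Sd)) x t), x s ≤ (m:Sd) :=
        (freq_visits ht.2 hex hP).mono (fun s hs => hs.1)
      by_cases hL : ∃ L, leftLim T x (lastVisit (fun k => k ≤ (m:Sd)) x t) L
      · rw [dif_pos hL]
        have := IsClosed.mem_of_frequently_of_tendsto isClosed_Iic
          (hfreq.mono (fun s hs => Set.mem_Iic.mpr hs)) hL.choose_spec
        exact this
      · rw [dif_neg hL]
        by_cases hp2 : ∃ n : ℕ, softLeftPair T x (lastVisit (fun k => k ≤ (m:Sd)) x t) n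
        · rw [dif_pos hp2]
          obtain ⟨k, hkm, hkfreq⟩ := freq_finite hfreq
          have hclus := mapClusterPt_of_frequently_eq hkfreq
          have hmem : (k:Sd) ∈ {L | MapClusterPt L (lf T (lastVisit (fun k => k ≤ (m:Sd)) x t)) x} :=
            hclus
          have hps := hp2.choose_spec
          rw [softLeftPair] at hps
          rw [hps] at hmem
          simp only [Set.mem_insert_iff, Set.mem_singleton_iff] at hmem
          rcases hmem with h | h
          · rw [← h]; exact_mod_cast hkm
          · exact absurd h (by simp)
        · rw [dif_neg hp2]; exact zero_le
  · rw [if_neg hex]; exact zero_le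

/-! ### the two-cluster-point structure on the right forces values in `{n} ∪ (m,∞]` -/

lemma eventually_pair_right {T t : ℝ} {x : ℝ → Sd} {n m : ℕ} (hp : softRightPair T x t n) :
    ∀ᶠ s in rf T t, x s = (n : Sd) ∨ (m : Sd) < x s := by
  rw [softRightPair] at hp
  have hall : ∀ᶠ s in rf T t, ∀ k ∈ Finset.range (m+1), x s ≠ (k:Sd) ∨ (k:Sd) = (n:Sd) := by
    rw [Filter.eventually_all_finset]
    intro k _
    by_cases hkn : (k:Sd) = (n:Sd)
    · exact Filter.Eventually.of_forall (fun s => Or.inr hkn)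
    · have hnc : ¬ MapClusterPt (k:Sd) (rf T t) x := by
        intro hc
        have hmem : (k:Sd) ∈ {L | MapClusterPt L (rf T t) x} := hc
        rw [hp] at hmem
        simp only [Set.mem_insert_iff, Set.mem_singleton_iff] at hmem
        rcases hmem with h | h
        · exact hkn h
        · exact absurd h (by simp)
      exact (eventually_ne_of_not_mapClusterPt (by simp) hnc).mono (fun s hs => Or.inl hs)
  refine hall.mono (fun s hs => ?_)
  by_cases hxs : x s ≤ (m:Sd)
  · have hne : x s ≠ ⊤ := fun hc => by simp [hc] at hxs
    have htn : (x s).toNat ≤ m := by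
      have := ENat.toNat_le_toNat hxs (by simp : (m:Sd) ≠ ⊤); simpa using this
    have hcast : ((x s).toNat : Sd) = x s := ENat.coe_toNat hne
    rcases hs (x s).toNat (Finset.mem_range.mpr (by omega)) with h | h
    · exact absurd hcast.symm h
    · left; rw [← hcast, h]
  · right; exact not_le.mp hxs

/-! ### right-continuity of the record process -/

lemma Rm_rightLim {T : ℝ} {m : ℕ} {x : ℝ → Sd} (hx : memE T x) {t : ℝ}
    (ht : t ∈ Set.Ico 0 T) :
    Filter.Tendsto (Rm T m x) (rf T t) (𝓝 (Rm T m x t)) := by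
  suffices hconst : ∀ᶠ s in rf T t, Rm T m x s = Rm T m x t by
    exact Filter.Tendsto.congr' (hconst.mono fun s hs => hs.symm) tendsto_const_nhds
  have hsrc := hx.1.1 t ⟨ht.1, ht.2.le⟩
  have hnov : (∀ᶠ s in rf T t, ¬ x s ≤ (m:Sd)) →
      ∀ᶠ s in rf T t, Rm T m x s = Rm T m x t := by
    intro hev
    obtain ⟨δ, hδ, hint⟩ := eventually_interval hev
    refine (rf_eventually_mem hδ).mono (fun s hs => ?_)
    rw [Rm]
    apply srec_eq_of_no_visits ht.1 hs.2.1.le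
    intro u hu1 hu2
    exact hint u hu1 (lt_of_le_of_lt hu2 hs.2.2) ⟨le_trans ht.1 hu1.le, hu2.trans hs.1.2⟩
  rcases hsrc with hA | ⟨n, hB, hxt⟩ | ⟨n, hC, hxt⟩
  · exact hnov ((eventually_lt_of_tendsto_top hA).mono (fun s hs => not_le.mpr hs))
  · rcases le_or_gt (n:Sd) (m:Sd) with hnm | hnm
    · have hev := eventually_eq_of_tendsto_coe hB
      have hRt : Rm T m x t = (n:Sd) := by
        rw [Rm_eq_self ht.1 (by rw [hxt]; exact hnm), hxt]
      refine ((rf_eventually_mem one_pos).and hev).mono (fun s hs => ?_)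
      rw [Rm_eq_self (le_trans ht.1 hs.1.2.1.le) (by rw [hs.2]; exact hnm), hs.2, hRt]
    · exact hnov ((eventually_eq_of_tendsto_coe hB).mono
        (fun s hs => not_le.mpr (by rw [hs]; exact hnm)))
  · rcases le_or_gt (n:Sd) (m:Sd) with hnm | hnm
    · have hRt : Rm T m x t = (n:Sd) := by
        rw [Rm_eq_self ht.1 (by rw [hxt]; exact hnm), hxt]
      obtain ⟨δ, hδ, hint⟩ := eventually_interval (eventually_pair_right (m := m) hC)
      refine (rf_eventually_mem hδ).mono (fun s hs => ?_)
      obtain ⟨hsIcc, hsgt, hslt⟩ := hs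
      rw [hRt]
      rcases hint s hsgt hslt hsIcc with hxs | hxs
      · rw [Rm_eq_self (le_trans ht.1 hsgt.le) (by rw [hxs]; exact hnm), hxs]
      · have hPs : ¬ x s ≤ (m:Sd) := not_le.mpr hxs
        have hex : ∃ u ∈ Set.Icc 0 s, x u ≤ (m:Sd) :=
          ⟨t, ⟨ht.1, hsgt.le⟩, by rw [hxt]; exact hnm⟩
        have hτmem : lastVisit (fun k => k ≤ (m:Sd)) x s ∈ Set.Icc 0 s := lastVisit_mem_Icc hex
        have hτget : t ≤ lastVisit (fun k => k ≤ (m:Sd)) x s :=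
          le_lastVisit_s9 ⟨ht.1, hsgt.le⟩ (by rw [hxt]; exact hnm)
        have hτT : lastVisit (fun k => k ≤ (m:Sd)) x s ≤ T := hτmem.2.trans hsIcc.2
        by_cases hPτ : x (lastVisit (fun k => k ≤ (m:Sd)) x s) ≤ (m:Sd)
        · have hrec : Rm T m x s = x (lastVisit (fun k => k ≤ (m:Sd)) x s) := by
            rw [Rm, srec, if_pos hex, if_pos hPτ]
          rw [hrec]
          rcases eq_or_lt_of_le hτget with he | hlt
          · rw [← he, hxt]
          · rcases hint _ hlt (lt_of_le_of_lt hτmem.2 hslt) ⟨le_trans ht.1 hτget, hτT⟩ with h | h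
            · exact h
            · exact absurd hPτ (not_le.mpr h)
        · have hτgt : t < lastVisit (fun k => k ≤ (m:Sd)) x s :=
            lt_of_le_of_ne hτget (fun hc => hPτ (by rw [← hc, hxt]; exact hnm))
          have hfreq0 := freq_visits (P := fun k => k ≤ (m:Sd)) hsIcc.2 hex hPτ
          have hevgt : ∀ᶠ u in lf T (lastVisit (fun k => k ≤ (m:Sd)) x s), t < u := by
            apply mem_nhdsWithin_of_mem_nhds
            exact Ioi_mem_nhds hτgt
          have hfreqn : ∃ᶠ u in lf T (lastVisit (fun k => k ≤ (m:Sd)) x s), x u = (n:Sd) := by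
            refine (hfreq0.and_eventually hevgt).mono (fun u hu => ?_)
            rcases hint u hu.2 (lt_of_le_of_lt hu.1.2.2 hslt)
              ⟨le_trans ht.1 hu.2.le, hu.1.2.2.trans hsIcc.2⟩ with h | h
            · exact h
            · exact absurd hu.1.1 (not_le.mpr h)
          have hsll := hx.1.2 _ ⟨lt_of_le_of_lt ht.1 hτgt, hτT⟩
          by_cases hL : ∃ L, leftLim T x (lastVisit (fun k => k ≤ (m:Sd)) x s) L
          · have hrec : Rm T m x s = hL.choose := by
              rw [Rm, srec, if_pos hex, if_neg hPτ, dif_pos hL]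
            rw [hrec]
            have := IsClosed.mem_of_frequently_of_tendsto isClosed_singleton
              (hfreqn.mono (fun u hu => Set.mem_singleton_iff.mpr hu)) hL.choose_spec
            simpa using this
          · have hp2 : ∃ k : ℕ, softLeftPair T x (lastVisit (fun k => k ≤ (m:Sd)) x s) k := by
              rcases hsll with h | h
              · exact absurd h hL
              · exact h
            have hrec : Rm T m x s = (hp2.choose : Sd) := by
              rw [Rm, srec, if_pos hex, if_neg hPτ, dif_neg hL, dif_pos hp2]
            rw [hrec]
            have hclus := mapClusterPt_of_frequently_eq hfreqn
            have hmem : (n:Sd) ∈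
                {L | MapClusterPt L (lf T (lastVisit (fun k => k ≤ (m:Sd)) x s)) x} := hclus
            have hps := hp2.choose_spec
            rw [softLeftPair] at hps
            rw [hps] at hmem
            simp only [Set.mem_insert_iff, Set.mem_singleton_iff] at hmem
            rcases hmem with h | h
            · exact h.symm
            · exact absurd h (by simp)
    · apply hnov
      refine (eventually_pair_right (m := m) hC).mono (fun s hs => ?_)
      rcases hs with h | h
      · rw [h]; exact not_le.mpr hnm
      · exact not_le.mpr h

/-! ### quantitative closeness of a time change to the identity -/

lemma eventually_eq_of_tendsto_ne_top {F : Filter ℝ} {y : ℝ → Sd} {k : Sd} (hk : k ≠ ⊤)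
    (h : Filter.Tendsto y F (𝓝 k)) : ∀ᶠ s in F, y s = k := by
  have hmem : {k} ∈ 𝓝 k := by rw [ENat.nhds_eq_pure hk]; exact Filter.mem_pure.mpr rfl
  exact h hmem

lemma timechange_close {T : ℝ} (hT : 0 < T) {l : ℝ → ℝ} {a : ℝ} (ha : 0 ≤ a)
    (hl : TimeChange T l)
    (hg : ∀ s ∈ Set.Icc 0 T, ∀ t ∈ Set.Icc 0 T, s < t → |Real.log ((l t - l s)/(t - s))| ≤ a)
    {u : ℝ} (hu : u ∈ Set.Icc 0 T) : |l u - u| ≤ T * (Real.exp a - 1) := by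
  have hea : 1 ≤ Real.exp a := by
    rw [← Real.exp_zero]; exact Real.exp_le_exp.mpr ha
  rcases eq_or_lt_of_le hu.1 with h0 | h0
  · rw [← h0, hl.1, sub_zero, abs_zero]
    have : 0 ≤ Real.exp a - 1 := by linarith
    positivity
  · have hlu : 0 < l u := by
      rw [← hl.1]
      exact hl.2.2.2.1 ⟨le_rfl, hT.le⟩ hu h0
    have hbound := hg 0 ⟨le_rfl, hT.le⟩ u hu h0
    rw [hl.1, sub_zero, sub_zero] at hbound
    have hratio : 0 < l u / u := by positivity
    have h1 : l u / u ≤ Real.exp a := by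
      calc l u / u = Real.exp (Real.log (l u / u)) := (Real.exp_log hratio).symm
        _ ≤ Real.exp a := Real.exp_le_exp.mpr (abs_le.mp hbound).2
    have h2 : Real.exp (-a) ≤ l u / u := by
      calc Real.exp (-a) ≤ Real.exp (Real.log (l u / u)) :=
            Real.exp_le_exp.mpr (by linarith [(abs_le.mp hbound).1])
        _ = l u / u := Real.exp_log hratio
    have hup : l u ≤ Real.exp a * u := (div_le_iff₀ h0).mp h1
    have hdown : Real.exp (-a) * u ≤ l u := (le_div_iff₀ h0).mp h2
    have hEpos : 0 < Real.exp a := Real.exp_pos a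
    have hinv : Real.exp (-a) = (Real.exp a)⁻¹ := Real.exp_neg a
    have hcancel : Real.exp a * (Real.exp a)⁻¹ = 1 := mul_inv_cancel₀ (ne_of_gt hEpos)
    have hsum : 1 - Real.exp (-a) ≤ Real.exp a - 1 := by
      rw [hinv]
      nlinarith [sq_nonneg (Real.exp a - 1)]
    have heinv1 : Real.exp (-a) ≤ 1 := by
      rw [← Real.exp_zero]; exact Real.exp_le_exp.mpr (by linarith)
    rw [abs_le]
    constructor
    · have hx1 : u * (1 - Real.exp (-a)) ≤ T * (1 - Real.exp (-a)) :=
        mul_le_mul_of_nonneg_right hu.2 (by linarith)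
      have hx2 : T * (1 - Real.exp (-a)) ≤ T * (Real.exp a - 1) :=
        mul_le_mul_of_nonneg_left hsum hT.le
      nlinarith
    · have hx1 : u * (Real.exp a - 1) ≤ T * (Real.exp a - 1) :=
        mul_le_mul_of_nonneg_right hu.2 (by linarith)
      nlinarith

/-! ### `d_S = 0` forces equality for trajectories in `D([0,T], S_m)` -/

lemma eqOn_of_dS_zero {T : ℝ} (hT : 0 < T) {m : ℕ} {u v : ℝ → Sd}
    (hum : ∀ t ∈ Set.Icc 0 T, u t ≤ (m:Sd)) (hvm : ∀ t ∈ Set.Icc 0 T, v t ≤ (m:Sd))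
    (hur : ∀ t ∈ Set.Ico 0 T, Filter.Tendsto u (rf T t) (𝓝 (u t)))
    (hvr : ∀ t ∈ Set.Ico 0 T, Filter.Tendsto v (rf T t) (𝓝 (v t)))
    (h0 : dS T u v = 0) : Set.EqOn u v (Set.Icc 0 T) := by
  have hδpos : (0:ℝ) < (((m:ℝ)+1)^2)⁻¹ := by positivity
  have hsmall : ∀ ε > 0, ∃ a ∈ TSet T u v, a < ε := by
    intro ε hε
    apply exists_lt_of_csInf_lt (TSet_nonempty T u v)
    rw [← dS_eq, h0]; exact hε
  intro t htmem
  rcases eq_or_lt_of_le htmem.2 with htT | htT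
  · subst htT
    obtain ⟨a, ⟨l, hl, hd, hg⟩, haδ⟩ := hsmall _ hδpos
    have hd' := hd t htmem
    rw [hl.2.1] at hd'
    exact sdist_res (hum t htmem) (hvm t htmem) (lt_of_le_of_lt hd' haδ)
  · have hut : u t ≠ ⊤ := fun hc => by
      have := hum t htmem; rw [hc] at this; simp at this
    have hvt : v t ≠ ⊤ := fun hc => by
      have := hvm t htmem; rw [hc] at this; simp at this
    obtain ⟨δ₁, hδ₁, hintu⟩ :=
      eventually_interval (eventually_eq_of_tendsto_ne_top hut (hur t ⟨htmem.1, htT⟩))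
    obtain ⟨δ₂, hδ₂, hintv⟩ :=
      eventually_interval (eventually_eq_of_tendsto_ne_top hvt (hvr t ⟨htmem.1, htT⟩))
    set η := min δ₁ δ₂ with hη
    have hηpos : 0 < η := lt_min hδ₁ hδ₂
    set s := t + min η (T - t) / 2 with hs
    have hmin2 : 0 < min η (T - t) := lt_min hηpos (by linarith)
    have hs1 : t < s := by rw [hs]; linarith
    have hs2 : s < t + η := by
      rw [hs]
      have : min η (T - t) ≤ η := min_le_left _ _
      linarith
    have hsT : s < T := by
      rw [hs]
      have : min η (T - t) ≤ T - t := min_le_right _ _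
      linarith
    have hsmem : s ∈ Set.Icc 0 T := ⟨by linarith [htmem.1], hsT.le⟩
    set γ := min (s - t) (t + η - s) with hγ
    have hγpos : 0 < γ := lt_min (by linarith) (by linarith)
    have hγ1 : γ ≤ s - t := min_le_left _ _
    have hγ2 : γ ≤ t + η - s := min_le_right _ _
    have hηδ₁ : η ≤ δ₁ := min_le_left _ _
    have hηδ₂ : η ≤ δ₂ := min_le_right _ _
    clear_value η s γ
    have hlogpos : 0 < Real.log (1 + γ / (2*T)) := Real.log_pos (by
      have : 0 < γ / (2*T) := by positivity
      linarith)
    obtain ⟨a, haT, haε⟩ := hsmall (min ((((m:ℝ)+1)^2)⁻¹) (Real.log (1 + γ / (2*T))))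
      (lt_min hδpos hlogpos)
    obtain ⟨l, hl, hd, hg⟩ := haT
    have ha0 : 0 ≤ a := nonneg_of_mem_TSet hT ⟨l, hl, hd, hg⟩
    have hclose := timechange_close hT ha0 hl hg hsmem
    have hTe : T * (Real.exp a - 1) ≤ γ / 2 := by
      have hexp : Real.exp a ≤ 1 + γ/(2*T) := by
        calc Real.exp a ≤ Real.exp (Real.log (1 + γ/(2*T))) :=
              Real.exp_le_exp.mpr (le_of_lt (lt_of_lt_of_le haε (min_le_right _ _)))
          _ = 1 + γ/(2*T) := Real.exp_log (by positivity)
      calc T * (Real.exp a - 1) ≤ T * (γ/(2*T)) :=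
            mul_le_mul_of_nonneg_left (by linarith) hT.le
        _ = γ/2 := by field_simp
    have habs := le_trans hclose hTe
    rw [abs_le] at habs
    have hlsmem : l s ∈ Set.Icc 0 T := hl.2.2.2.2 hsmem
    have hls1 : t < l s := by
      have : s - γ/2 ≤ l s := by linarith [habs.1]
      linarith
    have hls2 : l s < t + η := by
      have : l s ≤ s + γ/2 := by linarith [habs.2]
      linarith
    have h1 : u s = u t := hintu s hs1 (lt_of_lt_of_le hs2 (by linarith)) hsmem
    have h2 : v (l s) = v t := hintv (l s) hls1 (lt_of_lt_of_le hls2 (by linarith)) hlsmem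
    have h3 : u s = v (l s) :=
      sdist_res (hum s hsmem) (hvm (l s) hlsmem)
        (lt_of_le_of_lt (hd s hsmem) (lt_of_lt_of_le haε (min_le_left _ _)))
    rw [← h1, h3, h2]

/-! ### injectivity of the record family on `E([0,T], S_d)` -/

lemma eventually_interval_left {T t : ℝ} {Q : ℝ → Prop} (h : ∀ᶠ s in lf T t, Q s) :
    ∃ δ > 0, ∀ u, t - δ < u → u < t → u ∈ Set.Icc 0 T → Q u := by
  unfold lf at h
  rw [Filter.eventually_iff, mem_nhdsWithin] at h
  obtain ⟨U, hUopen, htU, hsub⟩ := h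
  obtain ⟨δ, hδpos, hball⟩ := Metric.isOpen_iff.mp hUopen t htU
  refine ⟨δ, hδpos, fun u h1 h2 h3 => hsub ⟨hball ?_, h3, h2⟩⟩
  rw [Metric.mem_ball, Real.dist_eq, abs_of_neg (by linarith)]
  linarith

lemma freq_finite' {F : Filter ℝ} {y : ℝ → Sd} {m : ℕ} {C : Set Sd}
    (hC : C ⊆ Set.Iic (m : Sd)) (hfreq : ∃ᶠ s in F, y s ∈ C) :
    ∃ k : ℕ, (k : Sd) ∈ C ∧ ∃ᶠ s in F, y s = (k : Sd) := by
  by_contra h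
  push_neg at h
  have hev : ∀ k ∈ Finset.range (m+1), ∀ᶠ s in F, ((k:Sd) ∈ C → y s ≠ (k : Sd)) := by
    intro k _
    by_cases hkC : (k:Sd) ∈ C
    · exact (h k hkC).mono (fun a ha _ => ha)
    · exact Filter.Eventually.of_forall (fun s hc => absurd hc hkC)
  have hall : ∀ᶠ s in F, ∀ k ∈ Finset.range (m+1), ((k:Sd) ∈ C → y s ≠ (k : Sd)) :=
    (Filter.eventually_all_finset (Finset.range (m+1))).mpr hev
  obtain ⟨s, hs1, hs2⟩ := (hfreq.and_eventually hall).exists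
  have hsle : y s ≤ (m:Sd) := hC hs1
  have hne : y s ≠ ⊤ := fun hc => by simp [hc] at hsle
  have htn : (y s).toNat ≤ m := by
    have := ENat.toNat_le_toNat hsle (by simp : (m:Sd) ≠ ⊤); simpa using this
  have hcast : ((y s).toNat : Sd) = y s := ENat.coe_toNat hne
  exact hs2 (y s).toNat (Finset.mem_range.mpr (by omega)) (hcast ▸ hs1) hcast.symm

/-- for a trajectory of `E` sitting at `⊤` at time `t`, the record `R_m y t` eventually
escapes any fixed finite value `n` -/
lemma record_ne_at_top {T : ℝ} (hT : 0 < T) {y : ℝ → Sd} (hy : memE T y) {t : ℝ}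
    (ht : t ∈ Set.Icc 0 T) (htop : y t = ⊤) (n : ℕ) :
    ∃ m : ℕ, (n : Sd) ≤ (m : Sd) ∧ Rm T m y t ≠ (n : Sd) := by
  have htpos : 0 < t := by
    rcases eq_or_lt_of_le ht.1 with h | h
    · exact absurd (h ▸ htop) hy.2.1
    · exact h
  obtain ⟨hσpos, hσtop, hσlim⟩ := hy.2.2 t ⟨htpos, ht.2⟩ htop
  have hexσ : ∃ s ∈ Set.Icc 0 t, y s ≠ ⊤ := ⟨0, ⟨le_rfl, htpos.le⟩, hy.2.1⟩
  have hσmem : sigmaInf y t ∈ Set.Icc 0 t := lastVisit_mem_Icc hexσ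
  have hσT : sigmaInf y t ≤ T := hσmem.2.trans ht.2
  obtain ⟨η, hηpos, hintn⟩ := eventually_interval_left (eventually_lt_of_tendsto_top (m := n) hσlim)
  have hη'pos : 0 < min η (sigmaInf y t) := lt_min hηpos hσpos
  obtain ⟨s₀, hs₀mem, hs₀gt⟩ := exists_lt_of_lt_csSup hexσ
    (by linarith [min_le_right η (sigmaInf y t)] : sigmaInf y t - min η (sigmaInf y t) < sigmaInf y t)
  obtain ⟨hs₀Icc, hs₀ne⟩ := hs₀mem
  have hs₀leσ : s₀ ≤ sigmaInf y t := le_lastVisit_s9 hs₀Icc hs₀ne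
  have hs₀ltσ : s₀ < sigmaInf y t :=
    lt_of_le_of_ne hs₀leσ (fun hc => hs₀ne (hc ▸ hσtop ▸ rfl))
  set m := max n (y s₀).toNat with hm
  have hnm : (n : Sd) ≤ (m : Sd) := by exact_mod_cast Nat.le_max_left _ _
  have hys₀ : y s₀ ≤ (m : Sd) := by
    rw [← ENat.coe_toNat hs₀ne]
    exact_mod_cast Nat.le_max_right _ _
  refine ⟨m, hnm, ?_⟩
  have hex : ∃ u ∈ Set.Icc 0 t, y u ≤ (m:Sd) := ⟨s₀, hs₀Icc, hys₀⟩
  obtain ⟨ηm, hηmpos, hintm⟩ :=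
    eventually_interval_left (eventually_lt_of_tendsto_top (m := m) hσlim)
  -- every visit to `S_m` happens before `σ - ηm`
  have hvis : ∀ u, u ∈ Set.Icc 0 t → y u ≤ (m:Sd) → u ≤ sigmaInf y t - ηm := by
    intro u hu hyu
    have hune : y u ≠ ⊤ := fun hc => by simp [hc] at hyu
    have huσ : u ≤ sigmaInf y t := le_lastVisit_s9 hu hune
    have hune2 : u ≠ sigmaInf y t := fun hc => hune (hc ▸ hσtop ▸ rfl)
    by_contra hgt
    push_neg at hgt
    exact absurd hyu (not_le.mpr (hintm u hgt (lt_of_le_of_ne huσ hune2)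
      ⟨hu.1, hu.2.trans ht.2⟩))
  have hτIcc : lastVisit (fun k => k ≤ (m:Sd)) y t ∈ Set.Icc 0 t := lastVisit_mem_Icc hex
  have hτge : s₀ ≤ lastVisit (fun k => k ≤ (m:Sd)) y t := le_lastVisit_s9 hs₀Icc hys₀
  have hτle : lastVisit (fun k => k ≤ (m:Sd)) y t ≤ sigmaInf y t - ηm :=
    csSup_le ⟨s₀, hs₀Icc, hys₀⟩ (fun u hu => hvis u hu.1 hu.2)
  have hτltσ : lastVisit (fun k => k ≤ (m:Sd)) y t < sigmaInf y t := by linarith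
  have hτgt : sigmaInf y t - η < lastVisit (fun k => k ≤ (m:Sd)) y t := by
    have : min η (sigmaInf y t) ≤ η := min_le_left _ _
    linarith
  have hτpos : 0 < lastVisit (fun k => k ≤ (m:Sd)) y t := by
    have : min η (sigmaInf y t) ≤ sigmaInf y t := min_le_right _ _
    linarith
  have hτT : lastVisit (fun k => k ≤ (m:Sd)) y t ≤ T := hτIcc.2.trans ht.2
  by_cases hPτ : y (lastVisit (fun k => k ≤ (m:Sd)) y t) ≤ (m:Sd)
  · have hrec : Rm T m y t = y (lastVisit (fun k => k ≤ (m:Sd)) y t) := by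
      rw [Rm, srec, if_pos hex, if_pos hPτ]
    rw [hrec]
    have := hintn _ hτgt hτltσ ⟨hτpos.le, hτT⟩
    exact fun hc => absurd (hc ▸ this) (by simp)
  · -- the record comes from the left limit structure at τ
    have hfreq0 := freq_visits (P := fun k => k ≤ (m:Sd)) ht.2 hex hPτ
    have hevgt : ∀ᶠ u in lf T (lastVisit (fun k => k ≤ (m:Sd)) y t),
        sigmaInf y t - η < u := by
      apply mem_nhdsWithin_of_mem_nhds
      exact Ioi_mem_nhds hτgt
    have hevmem : ∀ᶠ u in lf T (lastVisit (fun k => k ≤ (m:Sd)) y t),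
        u ∈ Set.Icc 0 T ∩ Set.Iio (lastVisit (fun k => k ≤ (m:Sd)) y t) :=
      eventually_mem_nhdsWithin
    have hfreqC : ∃ᶠ u in lf T (lastVisit (fun k => k ≤ (m:Sd)) y t),
        y u ∈ {k : Sd | (n:Sd) < k ∧ k ≤ (m:Sd)} := by
      refine ((hfreq0.and_eventually (hevgt.and hevmem)).mono (fun u hu => ?_))
      refine ⟨hintn u hu.2.1 (lt_of_lt_of_le hu.2.2.2 hτltσ.le) hu.2.2.1, hu.1.1⟩
    have hCclosed : IsClosed {k : Sd | (n:Sd) < k ∧ k ≤ (m:Sd)} := by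
      have hCeq : {k : Sd | (n:Sd) < k ∧ k ≤ (m:Sd)}
          = Set.Ici ((n:Sd)+1) ∩ Set.Iic (m:Sd) := by
        ext k
        simp only [Set.mem_setOf_eq, Set.mem_inter_iff, Set.mem_Ici, Set.mem_Iic]
        rw [ENat.add_one_le_iff (by simp : (n:Sd) ≠ ⊤)]
      rw [hCeq]
      exact isClosed_Ici.inter isClosed_Iic
    have hCsub : {k : Sd | (n:Sd) < k ∧ k ≤ (m:Sd)} ⊆ Set.Iic (m:Sd) := fun k hk => hk.2
    have hsll := hy.1.2 _ ⟨hτpos, hτT⟩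
    by_cases hL : ∃ L, leftLim T y (lastVisit (fun k => k ≤ (m:Sd)) y t) L
    · have hrec : Rm T m y t = hL.choose := by
        rw [Rm, srec, if_pos hex, if_neg hPτ, dif_pos hL]
      rw [hrec]
      have hmemC := IsClosed.mem_of_frequently_of_tendsto hCclosed hfreqC hL.choose_spec
      exact fun hc => absurd (hc ▸ hmemC.1) (by simp)
    · have hp2 : ∃ k : ℕ, softLeftPair T y (lastVisit (fun k => k ≤ (m:Sd)) y t) k := by
        rcases hsll with h | h
        · exact absurd h hL
        · exact h
      have hrec : Rm T m y t = (hp2.choose : Sd) := by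
        rw [Rm, srec, if_pos hex, if_neg hPτ, dif_neg hL, dif_pos hp2]
      rw [hrec]
      obtain ⟨k, hkC, hkfreq⟩ := freq_finite' hCsub hfreqC
      have hclus := mapClusterPt_of_frequently_eq hkfreq
      have hmem : (k:Sd) ∈
          {L | MapClusterPt L (lf T (lastVisit (fun k => k ≤ (m:Sd)) y t)) y} := hclus
      have hps := hp2.choose_spec
      rw [softLeftPair] at hps
      rw [hps] at hmem
      simp only [Set.mem_insert_iff, Set.mem_singleton_iff] at hmem
      rcases hmem with h | h
      · rw [← h]
        exact fun hc => absurd (hc ▸ hkC.1) (by simp)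
      · exact absurd h (by simp)

lemma record_inj {T : ℝ} (hT : 0 < T) {x y : ℝ → Sd} (hx : memE T x) (hy : memE T y)
    (hR : ∀ m : ℕ, Set.EqOn (Rm T m x) (Rm T m y) (Set.Icc 0 T)) :
    Set.EqOn x y (Set.Icc 0 T) := by
  intro t ht
  by_cases hxt : x t = ⊤ <;> by_cases hyt : y t = ⊤
  · rw [hxt, hyt]
  · -- x t = ⊤, y t finite : contradiction
    exfalso
    obtain ⟨m, hnm, hne⟩ := record_ne_at_top hT hx ht hxt (y t).toNat
    apply hne
    rw [hR m ht, Rm_eq_self ht.1 (by rw [← ENat.coe_toNat hyt]; exact hnm)]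
    exact (ENat.coe_toNat hyt).symm
  · exfalso
    obtain ⟨m, hnm, hne⟩ := record_ne_at_top hT hy ht hyt (x t).toNat
    apply hne
    rw [← hR m ht, Rm_eq_self ht.1 (by rw [← ENat.coe_toNat hxt]; exact hnm)]
    exact (ENat.coe_toNat hxt).symm
  · have hxm : x t ≤ ((max (x t).toNat (y t).toNat : ℕ) : Sd) := by
      rw [← ENat.coe_toNat hxt]
      exact_mod_cast Nat.le_max_left _ _
    have hym : y t ≤ ((max (x t).toNat (y t).toNat : ℕ) : Sd) := by
      rw [← ENat.coe_toNat hyt]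
      exact_mod_cast Nat.le_max_right _ _
    calc x t = Rm T (max (x t).toNat (y t).toNat) x t := (Rm_eq_self ht.1 hxm).symm
      _ = Rm T (max (x t).toNat (y t).toNat) y t := hR _ ht
      _ = y t := Rm_eq_self ht.1 hym

end SoftProof

open Soft Filter Topology in
/-- `d(x,y) = Σ_m 2^{-(m+1)} d_S(R_m x, R_m y)` is a metric on `E([0,T], S_d)`:
nonnegative, symmetric, satisfying the triangle inequality, and vanishing exactly on
equal trajectories. -/
theorem stmt9 (T : ℝ) (hT : 0 < T) :
    (∀ x y : ℝ → Soft.Sd, Soft.memE T x → Soft.memE T y → 0 ≤ Soft.dE T x y) ∧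
    (∀ x y : ℝ → Soft.Sd, Soft.memE T x → Soft.memE T y →
      Soft.dE T x y = Soft.dE T y x) ∧
    (∀ x y z : ℝ → Soft.Sd, Soft.memE T x → Soft.memE T y → Soft.memE T z →
      Soft.dE T x z ≤ Soft.dE T x y + Soft.dE T y z) ∧
    (∀ x y : ℝ → Soft.Sd, Soft.memE T x → Soft.memE T y →
      (Soft.dE T x y = 0 ↔ Set.EqOn x y (Set.Icc 0 T))) := by
  have hsum : ∀ x y : ℝ → Soft.Sd,
      Summable (fun m : ℕ => (1/2:ℝ)^(m+1) * Soft.dS T (Soft.Rm T m x) (Soft.Rm T m y)) := by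
    intro x y
    have hgeo : Summable (fun m : ℕ => (1/2:ℝ)^(m+1)) :=
      (summable_geometric_two.mul_left (1/2)).congr (fun m => by rw [pow_succ]; ring)
    apply Summable.of_nonneg_of_le
      (fun m => mul_nonneg (by positivity) (SoftProof.dS_nonneg hT _ _))
      (fun m => ?_) hgeo
    calc (1/2:ℝ)^(m+1) * Soft.dS T (Soft.Rm T m x) (Soft.Rm T m y)
        ≤ (1/2:ℝ)^(m+1) * 1 :=
          mul_le_mul_of_nonneg_left (SoftProof.dS_le_one hT _ _) (by positivity)
      _ = (1/2:ℝ)^(m+1) := mul_one _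
  refine ⟨?_, ?_, ?_, ?_⟩
  · intro x y _ _
    exact tsum_nonneg (fun m => mul_nonneg (by positivity) (SoftProof.dS_nonneg hT _ _))
  · intro x y _ _
    unfold Soft.dE
    exact tsum_congr (fun m => by
      rw [SoftProof.dS_comm hT (Soft.Rm T m x) (Soft.Rm T m y)])
  · intro x y z _ _ _
    unfold Soft.dE
    calc ∑' m : ℕ, (1/2:ℝ)^(m+1) * Soft.dS T (Soft.Rm T m x) (Soft.Rm T m z)
        ≤ ∑' m : ℕ, ((1/2:ℝ)^(m+1) * Soft.dS T (Soft.Rm T m x) (Soft.Rm T m y) +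
            (1/2:ℝ)^(m+1) * Soft.dS T (Soft.Rm T m y) (Soft.Rm T m z)) := by
          apply Summable.tsum_le_tsum ?_ (hsum x z) ((hsum x y).add (hsum y z))
          intro m
          rw [← mul_add]
          exact mul_le_mul_of_nonneg_left
            (SoftProof.dS_triangle hT (Soft.Rm T m x) (Soft.Rm T m y) (Soft.Rm T m z)) (by positivity)
      _ = _ := Summable.tsum_add (hsum x y) (hsum y z)
  · intro x y hx hy
    constructor
    · intro h0
      have h0' : (∑' m : ℕ, (1/2:ℝ)^(m+1) * Soft.dS T (Soft.Rm T m x) (Soft.Rm T m y)) = 0 := h0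
      have hzero : ∀ m : ℕ, Soft.dS T (Soft.Rm T m x) (Soft.Rm T m y) = 0 := by
        intro m
        have hoth : ∀ j : ℕ, j ≠ m →
            0 ≤ (1/2:ℝ)^(j+1) * Soft.dS T (Soft.Rm T j x) (Soft.Rm T j y) :=
          fun j _ => mul_nonneg (by positivity) (SoftProof.dS_nonneg hT _ _)
        have hle := Summable.le_tsum (hsum x y) m hoth
        rw [h0'] at hle
        have hge : 0 ≤ (1/2:ℝ)^(m+1) * Soft.dS T (Soft.Rm T m x) (Soft.Rm T m y) :=
          mul_nonneg (by positivity) (SoftProof.dS_nonneg hT _ _)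
        rcases mul_eq_zero.mp (le_antisymm hle hge) with h | h
        · exact absurd h (ne_of_gt (by positivity))
        · exact h
      apply SoftProof.record_inj hT hx hy
      intro m
      exact SoftProof.eqOn_of_dS_zero hT
        (fun t ht => SoftProof.Rm_le ht) (fun t ht => SoftProof.Rm_le ht)
        (fun t ht => SoftProof.Rm_rightLim hx ht) (fun t ht => SoftProof.Rm_rightLim hy ht)
        (hzero m)
    · intro hxy
      unfold Soft.dE
      have hz : ∀ m : ℕ, Soft.dS T (Soft.Rm T m x) (Soft.Rm T m y) = 0 := fun m =>
        SoftProof.dS_zero_of_eqOn hT (fun t ht => SoftProof.srec_congr ht hxy)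
      simp only [hz, mul_zero]
      exact tsum_zero
end
end

section
/- Let y ∈ D([0,T], S_m) with m ≥ 2 and set x = R_{m−1} y. If x is discontinuous at some t ∈ (0,T], then y(t) = x(t) and y is discontinuous at t. -/
open Filter Topology Set

noncomputable section
section Aux
open Soft Filter Topology Set

lemma aux_lastVisit_eq_self {P : Sd → Prop} {x : ℝ → Sd} {t : ℝ} (h0 : 0 ≤ t)
    (h : P (x t)) : Soft.lastVisit P x t = t :=
  IsGreatest.csSup_eq ⟨⟨⟨h0, le_rfl⟩, h⟩, fun _ hs => hs.1.2⟩

lemma aux_srec_self {T : ℝ} {P : Sd → Prop} {x : ℝ → Sd} {t : ℝ} (h0 : 0 ≤ t)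
    (h : P (x t)) : Soft.srec T P x t = x t := by
  unfold Soft.srec
  rw [aux_lastVisit_eq_self h0 h, if_pos ⟨t, ⟨h0, le_rfl⟩, h⟩, if_pos h]

lemma aux_srec_congr {T : ℝ} {P : Sd → Prop} {x : ℝ → Sd} {s s' : ℝ}
    (h : {u | u ∈ Set.Icc 0 s ∧ P (x u)} = {u | u ∈ Set.Icc 0 s' ∧ P (x u)}) :
    Soft.srec T P x s = Soft.srec T P x s' := by
  have hlv : Soft.lastVisit P x s = Soft.lastVisit P x s' := by
    unfold Soft.lastVisit; rw [show {a : ℝ | a ∈ Set.Icc 0 s ∧ P (x a)} = _ from h]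
  have hex : (∃ u ∈ Set.Icc 0 s, P (x u)) ↔ (∃ u ∈ Set.Icc 0 s', P (x u)) := by
    constructor
    · rintro ⟨u, hu1, hu2⟩
      obtain ⟨h1, h2⟩ := (Set.ext_iff.mp h u).mp ⟨hu1, hu2⟩
      exact ⟨u, h1, h2⟩
    · rintro ⟨u, hu1, hu2⟩
      obtain ⟨h1, h2⟩ := (Set.ext_iff.mp h u).mpr ⟨hu1, hu2⟩
      exact ⟨u, h1, h2⟩
  unfold Soft.srec
  rw [hlv]
  classical
  exact if_congr hex rfl rfl

end Aux

open Soft Filter Topology in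
/-- Let `y ∈ D([0,T], S_{m+1})` and `x = R_m y`. If `x` is discontinuous at `t ∈ (0,T]`,
then `y(t) = x(t)` and `y` is discontinuous at `t`. -/
theorem stmt12 (T : ℝ) (hT : 0 < T) (m : ℕ) (y : ℝ → Soft.Sd)
    (hy : Soft.memD T (m + 1) y) (t : ℝ) (ht : t ∈ Set.Ioc 0 T)
    (hdisc : ¬ Soft.leftLim T (Soft.Rm T m y) t (Soft.Rm T m y t)) :
    y t = Soft.Rm T m y t ∧ ¬ Soft.leftLim T y t (y t) := by
  classical
  obtain ⟨ht0, htT⟩ := ht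
  have hlf : Soft.lf T t = 𝓝[Set.Icc 0 T ∩ Set.Iio t] t := rfl
  have hsub : Set.Ioo 0 t ⊆ Set.Icc 0 T ∩ Set.Iio t := fun u hu =>
    ⟨⟨hu.1.le, hu.2.le.trans htT⟩, hu.2⟩
  have hnb : (Soft.lf T t).NeBot := by
    rw [hlf]
    refine Filter.NeBot.mono ?_ (nhdsWithin_mono t hsub)
    exact mem_closure_iff_nhdsWithin_neBot.mp
      (by rw [closure_Ioo ht0.ne]; exact ⟨ht0.le, le_rfl⟩)
  haveI := hnb
  obtain ⟨L, hL⟩ := hy.2.2 t ⟨ht0, htT⟩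
  have hmem : ∀ᶠ u in Soft.lf T t, u ∈ Set.Icc 0 T ∩ Set.Iio t := by
    rw [hlf]; exact eventually_mem_nhdsWithin
  have hLle : L ≤ ((m + 1 : ℕ) : Soft.Sd) :=
    le_of_tendsto hL (hmem.mono fun u hu => hy.1 u hu.1)
  have hLtop : L ≠ ⊤ := ne_top_of_le_ne_top (ENat.coe_ne_top (m+1)) hLle
  have hyev : ∀ᶠ u in Soft.lf T t, y u = L := by
    have h2 := hL
    unfold Soft.leftLim at h2
    rw [ENat.nhds_eq_pure hLtop] at h2
    exact tendsto_pure.mp h2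
  have hev2 : ∀ᶠ u in 𝓝 t, u ∈ Set.Icc 0 T ∩ Set.Iio t → y u = L := by
    rw [hlf] at hyev; exact eventually_nhdsWithin_iff.mp hyev
  obtain ⟨ε, hε, hball⟩ := Metric.eventually_nhds_iff.mp hev2
  set s0 : ℝ := t - min ε t with hs0
  have hs00 : 0 ≤ s0 := by
    simp only [hs0, sub_nonneg]; exact min_le_right _ _
  have hs0t : s0 < t := by
    have := lt_min hε ht0
    simp only [hs0]; linarith
  have hstep : ∀ u, s0 < u → u < t → y u = L := by
    intro u h1 h2
    have hmin : min ε t ≤ ε := min_le_left _ _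
    apply hball
    · rw [Real.dist_eq, abs_lt]
      constructor
      · simp only [hs0] at h1; linarith
      · linarith
    · exact ⟨⟨le_of_lt (lt_of_le_of_lt hs00 h1), h2.le.trans htT⟩, h2⟩
  have hIoo : Set.Ioo s0 t ∈ Soft.lf T t := by
    rw [hlf]
    have h1 : Set.Ioi s0 ∈ 𝓝[Set.Icc 0 T ∩ Set.Iio t] t :=
      mem_nhdsWithin_of_mem_nhds (Ioi_mem_nhds hs0t)
    filter_upwards [h1, eventually_mem_nhdsWithin] with u hu1 hu2
    exact ⟨hu1, hu2.2⟩
  have huniq : ∀ L', Filter.Tendsto y (Soft.lf T t) (𝓝 L') → L' = L :=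
    fun L' h' => tendsto_nhds_unique h' hL
  have hnotleft : y t ≠ L → ¬ Soft.leftLim T y t (y t) :=
    fun hne hc => hne (huniq _ hc)
  by_cases hLm : L ≤ (m : Soft.Sd)
  · -- Case A : left limit of y is in S_m
    have hxconst : ∀ u, s0 < u → u < t → Soft.Rm T m y u = L := by
      intro u h1 h2
      have h0u : (0 : ℝ) ≤ u := le_of_lt (lt_of_le_of_lt hs00 h1)
      have hyu : y u ≤ (m : Soft.Sd) := by rw [hstep u h1 h2]; exact hLm
      have h := aux_srec_self (T := T) (P := fun k => k ≤ (m : Soft.Sd)) (x := y) h0u hyu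
      have h' : Soft.Rm T m y u = y u := h
      rw [h', hstep u h1 h2]
    have hxtend : Soft.leftLim T (Soft.Rm T m y) t L := by
      unfold Soft.leftLim
      refine Filter.Tendsto.congr' ?_ tendsto_const_nhds
      filter_upwards [hIoo] with u hu
      exact (hxconst u hu.1 hu.2).symm
    have hxt : Soft.Rm T m y t ≠ L := fun h => hdisc (by rw [h]; exact hxtend)
    have hmid : y ((s0 + t) / 2) ≤ (m : Soft.Sd) := by
      rw [hstep _ (by linarith) (by linarith)]; exact hLm
    have hexists : ∃ s ∈ Set.Icc 0 t, y s ≤ (m : Soft.Sd) :=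
      ⟨(s0 + t) / 2, ⟨by linarith, by linarith⟩, hmid⟩
    have hlvt : Soft.lastVisit (fun k => k ≤ (m : Soft.Sd)) y t = t := by
      apply csSup_eq_of_forall_le_of_forall_lt_exists_gt
      · exact ⟨(s0 + t) / 2, ⟨by constructor <;> linarith, hmid⟩⟩
      · exact fun a ha => ha.1.2
      · intro w hw
        have hmw : max w s0 < t := max_lt hw hs0t
        have h1 : s0 < (max w s0 + t) / 2 :=
          lt_of_le_of_lt (le_max_right w s0) (by linarith)
        have h2 : (max w s0 + t) / 2 < t := by linarith
        refine ⟨(max w s0 + t) / 2, ⟨⟨le_of_lt (lt_of_le_of_lt hs00 h1), h2.le⟩,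
          by rw [hstep _ h1 h2]; exact hLm⟩, ?_⟩
        exact lt_of_le_of_lt (le_max_left w s0) (by linarith)
    by_cases hyt : y t ≤ (m : Soft.Sd)
    · have hxyt : Soft.Rm T m y t = y t := aux_srec_self (T := T) (P := fun k => k ≤ (m : Soft.Sd)) (x := y) ht0.le hyt
      refine ⟨hxyt.symm, hnotleft ?_⟩
      intro h; apply hxt; rw [hxyt, h]
    · exfalso
      have hch : ∃ L', Soft.leftLim T y t L' := ⟨L, hL⟩
      have hxval : Soft.Rm T m y t = hch.choose := by
        unfold Soft.Rm Soft.srec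
        rw [hlvt, if_pos hexists, if_neg hyt, dif_pos hch]
      apply hxt
      rw [hxval, huniq _ hch.choose_spec]
  · -- Case B : left limit of y is m+1, outside S_m
    have hAset : ∀ s, s0 ≤ s → s < t →
        {u | u ∈ Set.Icc 0 s ∧ y u ≤ (m : Soft.Sd)} =
          {u | u ∈ Set.Icc 0 s0 ∧ y u ≤ (m : Soft.Sd)} := by
      intro s h1 h2
      ext u
      simp only [Set.mem_setOf_eq, Set.mem_Icc]
      constructor
      · rintro ⟨⟨hu0, hus⟩, hum⟩
        refine ⟨⟨hu0, ?_⟩, hum⟩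
        by_contra hcon
        push_neg at hcon
        rw [hstep u hcon (lt_of_le_of_lt hus h2)] at hum
        exact hLm hum
      · rintro ⟨⟨hu0, hus⟩, hum⟩
        exact ⟨⟨hu0, hus.trans h1⟩, hum⟩
    have hxconst : ∀ s, s0 < s → s < t → Soft.Rm T m y s = Soft.Rm T m y s0 :=
      fun s h1 h2 => aux_srec_congr (hAset s h1.le h2)
    have hxtend : Soft.leftLim T (Soft.Rm T m y) t (Soft.Rm T m y s0) := by
      unfold Soft.leftLim
      refine Filter.Tendsto.congr' ?_ tendsto_const_nhds
      filter_upwards [hIoo] with u hu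
      exact (hxconst u hu.1 hu.2).symm
    have hxt : Soft.Rm T m y t ≠ Soft.Rm T m y s0 :=
      fun h => hdisc (by rw [h]; exact hxtend)
    by_cases hyt : y t ≤ (m : Soft.Sd)
    · have hxyt : Soft.Rm T m y t = y t := aux_srec_self (T := T) (P := fun k => k ≤ (m : Soft.Sd)) (x := y) ht0.le hyt
      refine ⟨hxyt.symm, hnotleft ?_⟩
      intro h
      rw [h] at hyt
      exact hLm hyt
    · exfalso
      apply hxt
      apply aux_srec_congr
      ext u
      simp only [Set.mem_setOf_eq, Set.mem_Icc]
      constructor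
      · rintro ⟨⟨hu0, hut⟩, hum⟩
        refine ⟨⟨hu0, ?_⟩, hum⟩
        by_contra hcon
        push_neg at hcon
        rcases lt_or_eq_of_le hut with h | h
        · rw [hstep u hcon h] at hum
          exact hLm hum
        · rw [h] at hum
          exact hyt hum
      · rintro ⟨⟨hu0, hus⟩, hum⟩
        exact ⟨⟨hu0, hus.trans hs0t.le⟩, hum⟩
end
end
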